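/- arXiv:2205.08117 — 3 statements merged into one kernel-verified Lean document; each statement's English description precedes it below -/
import Mathlib

section
/- The kernel of the surjective k-algebra homomorphism from the polynomial ring k[x_1,…,x_n, y_s,…,y_n] to the Rees ring R[𝔞T] sending x_i ↦ x_i (1 ≤ i ≤ n) and y_j ↦ x_j^{v_j}T (s ≤ j ≤ n) is generated by the elements x_i^{v_i}·y_j − x_j^{v_j}·y_i for s ≤ i < j ≤ n. -/
open MvPolynomial

section ReesAux
variable {k : Type} [Field k] {n s : ℕ} {v : ℕ → ℕ}

private abbrev Jt (n s : ℕ) := {i : Fin n // s ≤ (i : ℕ) + 1}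

private noncomputable def Gmap (k : Type) [Field k] (n s : ℕ) (v : ℕ → ℕ) :
    (Fin n ⊕ Jt n s) → Polynomial (MvPolynomial (Fin n) k) :=
  Sum.elim (fun i => Polynomial.C (MvPolynomial.X i))
    (fun j => Polynomial.C (MvPolynomial.X j.1 ^ v ((j.1 : ℕ) + 1)) * Polynomial.X)

private lemma Gmap_def : Gmap k n s v =
    Sum.elim (fun i => Polynomial.C (MvPolynomial.X i))
      (fun j : Jt n s => Polynomial.C (MvPolynomial.X j.1 ^ v ((j.1 : ℕ) + 1)) * Polynomial.X) :=
  rfl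

private def Bdeg (d : (Fin n ⊕ Jt n s) →₀ ℕ) : ℕ := ∑ j : Jt n s, d (Sum.inr j)

private noncomputable def Edeg (s : ℕ) (v : ℕ → ℕ) (d : (Fin n ⊕ Jt n s) →₀ ℕ) : Fin n →₀ ℕ :=
  Finsupp.equivFunOnFinite.symm (fun i => d (Sum.inl i) +
    if h : s ≤ (i : ℕ) + 1 then v ((i : ℕ) + 1) * d (Sum.inr ⟨i, h⟩) else 0)

private lemma Edeg_apply (d : (Fin n ⊕ Jt n s) →₀ ℕ) (i : Fin n) :
    Edeg s v d i = d (Sum.inl i) +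
      if h : s ≤ (i : ℕ) + 1 then v ((i : ℕ) + 1) * d (Sum.inr ⟨i, h⟩) else 0 := rfl

private lemma Bdeg_add (d e : (Fin n ⊕ Jt n s) →₀ ℕ) : Bdeg (d + e) = Bdeg d + Bdeg e := by
  simp [Bdeg, Finset.sum_add_distrib]

private lemma Edeg_add (d e : (Fin n ⊕ Jt n s) →₀ ℕ) :
    Edeg s v (d + e) = Edeg s v d + Edeg s v e := by
  ext i
  simp only [Edeg_apply, Finsupp.add_apply]
  split <;> ring

private lemma Bdeg_single_inl (i : Fin n) (m : ℕ) :
    Bdeg (Finsupp.single (Sum.inl i : Fin n ⊕ Jt n s) m) = 0 := by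
  simp [Bdeg, Finsupp.single_apply]

private lemma Bdeg_single_inr (j : Jt n s) (m : ℕ) :
    Bdeg (Finsupp.single (Sum.inr j : Fin n ⊕ Jt n s) m) = m := by
  simp [Bdeg, Finsupp.single_apply]

private lemma Edeg_single_inl (i : Fin n) (m : ℕ) :
    Edeg s v (Finsupp.single (Sum.inl i : Fin n ⊕ Jt n s) m) = Finsupp.single i m := by
  ext i'
  simp only [Edeg_apply, Finsupp.single_apply]
  split <;> simp_all

private lemma Edeg_single_inr (j : Jt n s) (m : ℕ) :
    Edeg s v (Finsupp.single (Sum.inr j : Fin n ⊕ Jt n s) m) =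
      Finsupp.single j.1 (v ((j.1 : ℕ) + 1) * m) := by
  ext i'
  rcases eq_or_ne (j.1) i' with h | h
  · subst h
    simp only [Edeg_apply, Finsupp.single_apply, dif_pos j.2]
    simp [Subtype.ext_iff]
  · simp only [Edeg_apply, Finsupp.single_apply, if_neg h]
    rw [if_neg (by simp)]
    rw [zero_add]
    split
    · rw [if_neg, mul_zero]
      simp only [Sum.inr.injEq, Subtype.ext_iff]
      exact fun e => h e
    · rfl

private lemma phi_monomial (d : (Fin n ⊕ Jt n s) →₀ ℕ) :
    MvPolynomial.aeval (Gmap k n s v) (MvPolynomial.monomial d (1 : k)) =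
      Polynomial.monomial (Bdeg d) (MvPolynomial.monomial (Edeg s v d) 1) := by
  induction d using Finsupp.induction with
  | zero =>
    have h1 : (Edeg s v (0 : (Fin n ⊕ Jt n s) →₀ ℕ)) = 0 := by ext i; simp [Edeg_apply]
    have h2 : Bdeg (0 : (Fin n ⊕ Jt n s) →₀ ℕ) = 0 := by simp [Bdeg]
    rw [h1, h2]
    simp
  | single_add x m d hx hm ih =>
    rw [show MvPolynomial.monomial (Finsupp.single x m + d) (1:k)
        = MvPolynomial.monomial (Finsupp.single x m) 1 * MvPolynomial.monomial d 1 by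
      rw [MvPolynomial.monomial_mul, mul_one]]
    rw [map_mul, ih, Bdeg_add, Edeg_add]
    have hsingle : MvPolynomial.aeval (Gmap k n s v)
        (MvPolynomial.monomial (Finsupp.single x m) (1 : k)) =
        Polynomial.monomial (Bdeg (Finsupp.single x m))
          (MvPolynomial.monomial (Edeg s v (Finsupp.single x m)) 1) := by
      rw [MvPolynomial.aeval_monomial]
      rw [Finsupp.prod_single_index (by simp)]
      cases x with
      | inl i =>
        simp only [Gmap, Sum.elim_inl, Bdeg_single_inl, Edeg_single_inl]
        rw [← Polynomial.C_pow, ← MvPolynomial.X_pow_eq_monomial]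
        simp
      | inr j =>
        simp only [Gmap, Sum.elim_inr, Bdeg_single_inr, Edeg_single_inr]
        rw [mul_pow, ← Polynomial.C_pow, ← pow_mul]
        rw [MvPolynomial.X_pow_eq_monomial]
        rw [← Polynomial.C_mul_X_pow_eq_monomial]
        simp
    rw [hsingle, Polynomial.monomial_mul_monomial, MvPolynomial.monomial_mul, mul_one]

private def Red (s : ℕ) (v : ℕ → ℕ) (d : (Fin n ⊕ Jt n s) →₀ ℕ) : Prop :=
  ∀ i j : Jt n s, (i.1 : ℕ) < (j.1 : ℕ) → v ((j.1 : ℕ) + 1) ≤ d (Sum.inl j.1) →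
    d (Sum.inr i) = 0

private lemma red_inj_aux (d d' : (Fin n ⊕ Jt n s) →₀ ℕ) (hd' : Red s v d')
    (hB : Bdeg d = Bdeg d') (hE : Edeg s v d = Edeg s v d') (j : Jt n s)
    (hmax : ∀ l : Jt n s, (j.1 : ℕ) < (l.1 : ℕ) → d (Sum.inr l) = d' (Sum.inr l))
    (hj : d' (Sum.inr j) < d (Sum.inr j)) : False := by
  have hEj := congrArg (fun e => e j.1) hE
  simp only [Edeg_apply, dif_pos j.2, Subtype.coe_eta] at hEj
  have hvj : v ((j.1 : ℕ) + 1) ≤ d' (Sum.inl j.1) := by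
    have : v ((j.1 : ℕ) + 1) * (d' (Sum.inr j) + 1) ≤ v ((j.1 : ℕ) + 1) * d (Sum.inr j) :=
      Nat.mul_le_mul_left _ hj
    nlinarith
  have hsplit : ∀ e : (Fin n ⊕ Jt n s) →₀ ℕ, Bdeg e =
      (∑ l ∈ Finset.univ.filter (fun l : Jt n s => (l.1 : ℕ) < (j.1 : ℕ)), e (Sum.inr l))
      + e (Sum.inr j)
      + (∑ l ∈ Finset.univ.filter (fun l : Jt n s => (j.1 : ℕ) < (l.1 : ℕ)), e (Sum.inr l)) := by
    intro e
    have hu : (Finset.univ : Finset (Jt n s)) =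
        (Finset.univ.filter (fun l : Jt n s => (l.1 : ℕ) < (j.1 : ℕ))) ∪
        (insert j (Finset.univ.filter (fun l : Jt n s => (j.1 : ℕ) < (l.1 : ℕ)))) := by
      ext l
      simp only [Finset.mem_univ, Finset.mem_union, Finset.mem_insert, Finset.mem_filter,
        true_and, true_iff]
      rcases lt_trichotomy ((l.1 : ℕ)) ((j.1 : ℕ)) with h | h | h
      · exact Or.inl h
      · exact Or.inr (Or.inl (Subtype.ext (Fin.ext h)))
      · exact Or.inr (Or.inr h)
    rw [Bdeg]
    nth_rewrite 1 [hu]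
    rw [Finset.sum_union, Finset.sum_insert]
    · ring
    · simp
    · rw [Finset.disjoint_left]
      intro a ha
      simp only [Finset.mem_filter, Finset.mem_univ, true_and] at ha
      simp only [Finset.mem_insert, Finset.mem_filter, Finset.mem_univ, true_and, not_or]
      constructor
      · intro h; subst h; omega
      · omega
  have h1 := hsplit d
  have h2 := hsplit d'
  have htail : (∑ l ∈ Finset.univ.filter (fun l : Jt n s => (j.1 : ℕ) < (l.1 : ℕ)), d (Sum.inr l))
      = ∑ l ∈ Finset.univ.filter (fun l : Jt n s => (j.1 : ℕ) < (l.1 : ℕ)), d' (Sum.inr l) := by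
    apply Finset.sum_congr rfl
    intro l hl
    simp only [Finset.mem_filter, Finset.mem_univ, true_and] at hl
    exact hmax l hl
  have hlt : (∑ l ∈ Finset.univ.filter (fun l : Jt n s => (l.1 : ℕ) < (j.1 : ℕ)), d (Sum.inr l))
      < ∑ l ∈ Finset.univ.filter (fun l : Jt n s => (l.1 : ℕ) < (j.1 : ℕ)), d' (Sum.inr l) := by
    omega
  obtain ⟨i, hi, hii⟩ := Finset.exists_lt_of_sum_lt hlt
  simp only [Finset.mem_filter, Finset.mem_univ, true_and] at hi
  have := hd' i j hi hvj
  omega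

private lemma red_inj (d d' : (Fin n ⊕ Jt n s) →₀ ℕ) (hd : Red s v d) (hd' : Red s v d')
    (hB : Bdeg d = Bdeg d') (hE : Edeg s v d = Edeg s v d') : d = d' := by
  have hinr : ∀ l : Jt n s, d (Sum.inr l) = d' (Sum.inr l) := by
    by_contra hne
    push_neg at hne
    obtain ⟨l0, hl0⟩ := hne
    have hT : (Finset.univ.filter (fun l : Jt n s => d (Sum.inr l) ≠ d' (Sum.inr l))).Nonempty :=
      ⟨l0, by simp [hl0]⟩
    obtain ⟨j, hjmem, hjmax⟩ := Finset.exists_max_image _ (fun l : Jt n s => (l.1 : ℕ)) hT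
    simp only [Finset.mem_filter, Finset.mem_univ, true_and] at hjmem
    have hmax : ∀ l : Jt n s, (j.1 : ℕ) < (l.1 : ℕ) → d (Sum.inr l) = d' (Sum.inr l) := by
      intro l hl
      by_contra hne2
      have := hjmax l (by simp [hne2])
      omega
    rcases Nat.lt_or_ge (d' (Sum.inr j)) (d (Sum.inr j)) with h | h
    · exact red_inj_aux d d' hd' hB hE j hmax h
    · exact red_inj_aux d' d hd hB.symm hE.symm j (fun l hl => (hmax l hl).symm) (by omega)
  ext x
  cases x with
  | inr l => exact hinr l
  | inl i =>
    have hEi := congrArg (fun e => e i) hE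
    simp only [Edeg_apply] at hEi
    split at hEi
    · rename_i h
      rw [hinr ⟨i, h⟩] at hEi
      omega
    · omega

private noncomputable def Igen (k : Type) [Field k] (n s : ℕ) (v : ℕ → ℕ) :
    Ideal (MvPolynomial (Fin n ⊕ Jt n s) k) :=
  Ideal.span {q | ∃ i j : Jt n s, (i.1 : ℕ) < (j.1 : ℕ) ∧
    q = X (Sum.inl i.1) ^ v ((i.1 : ℕ) + 1) * X (Sum.inr j)
      - X (Sum.inl j.1) ^ v ((j.1 : ℕ) + 1) * X (Sum.inr i)}

private def mu (d : (Fin n ⊕ Jt n s) →₀ ℕ) : ℕ := ∑ j : Jt n s, (n - (j.1 : ℕ)) * d (Sum.inr j)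

private lemma mu_add (d e : (Fin n ⊕ Jt n s) →₀ ℕ) : mu (d + e) = mu d + mu e := by
  simp [mu, Finset.sum_add_distrib, Nat.mul_add]

private lemma mu_single_inl (i : Fin n) (m : ℕ) :
    mu (Finsupp.single (Sum.inl i : Fin n ⊕ Jt n s) m) = 0 := by
  simp [mu, Finsupp.single_apply]

private lemma mu_single_inr (j : Jt n s) (m : ℕ) :
    mu (Finsupp.single (Sum.inr j : Fin n ⊕ Jt n s) m) = (n - (j.1 : ℕ)) * m := by
  simp [mu, Finsupp.single_apply]

private lemma reduce_step (d : (Fin n ⊕ Jt n s) →₀ ℕ) (hd : ¬ Red s v d) :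
    ∃ e : (Fin n ⊕ Jt n s) →₀ ℕ, mu e < mu d ∧
      (monomial d 1 - monomial e 1 : MvPolynomial (Fin n ⊕ Jt n s) k) ∈ Igen k n s v := by
  simp only [Red, not_forall] at hd
  obtain ⟨i, j, hij, hvj, hi⟩ := hd
  set A : (Fin n ⊕ Jt n s) →₀ ℕ :=
    Finsupp.single (Sum.inl j.1) (v ((j.1 : ℕ) + 1)) + Finsupp.single (Sum.inr i) 1 with hA
  have hAle : ∀ x, A x ≤ d x := by
    intro x
    cases x with
    | inl i' =>
      simp only [hA, Finsupp.add_apply, Finsupp.single_apply]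
      rw [show (if Sum.inr i = (Sum.inl i' : Fin n ⊕ Jt n s) then 1 else 0) = 0
        from if_neg (by simp), add_zero]
      split_ifs with h1
      · obtain rfl := Sum.inl.inj h1; exact hvj
      · simp
    | inr l =>
      simp only [hA, Finsupp.add_apply, Finsupp.single_apply]
      rw [show (if Sum.inl (j.1 : Fin n) = (Sum.inr l : Fin n ⊕ Jt n s)
          then v ((j.1 : ℕ) + 1) else 0) = 0 from if_neg (by simp), zero_add]
      split_ifs with h1
      · obtain rfl := Sum.inr.inj h1; omega
      · simp
  set c : (Fin n ⊕ Jt n s) →₀ ℕ := d - A with hc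
  have hdc : d = c + A := by
    ext x
    simp only [hc, Finsupp.add_apply, Finsupp.tsub_apply]
    have := hAle x
    omega
  set e : (Fin n ⊕ Jt n s) →₀ ℕ :=
    c + (Finsupp.single (Sum.inl i.1) (v ((i.1 : ℕ) + 1)) + Finsupp.single (Sum.inr j) 1) with he
  refine ⟨e, ?_, ?_⟩
  · have h1 : mu d = mu c + (n - (i.1 : ℕ)) := by
      rw [hdc, mu_add, hA, mu_add, mu_single_inl, mu_single_inr]; ring
    have h2 : mu e = mu c + (n - (j.1 : ℕ)) := by
      rw [he, mu_add, mu_add, mu_single_inl, mu_single_inr]; ring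
    have : (j.1 : ℕ) < n := j.1.isLt
    omega
  · have key : (monomial d 1 - monomial e 1 : MvPolynomial (Fin n ⊕ Jt n s) k)
        = monomial c 1 *
          -(X (Sum.inl i.1) ^ v ((i.1 : ℕ) + 1) * X (Sum.inr j)
            - X (Sum.inl j.1) ^ v ((j.1 : ℕ) + 1) * X (Sum.inr i)) := by
      rw [hdc, he, hA]
      rw [← add_assoc, MvPolynomial.monomial_add_single, MvPolynomial.monomial_add_single]
      rw [← add_assoc, MvPolynomial.monomial_add_single, MvPolynomial.monomial_add_single]
      ring
    rw [key]
    apply Ideal.mul_mem_left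
    apply neg_mem
    apply Ideal.subset_span
    exact ⟨i, j, hij, rfl⟩

private lemma reduce (N : ℕ) : ∀ d : (Fin n ⊕ Jt n s) →₀ ℕ, mu d ≤ N →
    ∃ e : (Fin n ⊕ Jt n s) →₀ ℕ, Red s v e ∧
      (monomial d 1 - monomial e 1 : MvPolynomial (Fin n ⊕ Jt n s) k) ∈ Igen k n s v := by
  induction N with
  | zero =>
    intro d hmu
    by_cases hd : Red s v d
    · exact ⟨d, hd, by simp⟩
    · obtain ⟨e, he, -⟩ := reduce_step (k := k) d hd
      omega
  | succ N ih =>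
    intro d hmu
    by_cases hd : Red s v d
    · exact ⟨d, hd, by simp⟩
    · obtain ⟨e', he', hmem⟩ := reduce_step (k := k) d hd
      obtain ⟨e, hred, hmem2⟩ := ih e' (by omega)
      refine ⟨e, hred, ?_⟩
      have : (monomial d 1 - monomial e 1 : MvPolynomial (Fin n ⊕ Jt n s) k)
          = (monomial d 1 - monomial e' 1) + (monomial e' 1 - monomial e 1) := by ring
      rw [this]
      exact Ideal.add_mem _ hmem hmem2

private lemma red_support_zero
    (g : MvPolynomial (Fin n ⊕ Jt n s) k)
    (hred : ∀ d ∈ g.support, Red s v d)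
    (hg : MvPolynomial.aeval (Gmap k n s v) g = 0) : g = 0 := by
  by_contra hne
  obtain ⟨d0, hd0⟩ := MvPolynomial.ne_zero_iff.mp hne
  have hd0m : d0 ∈ g.support := MvPolynomial.mem_support_iff.mpr hd0
  have hexp : MvPolynomial.aeval (Gmap k n s v) g =
      ∑ d ∈ g.support, (MvPolynomial.coeff d g) •
        Polynomial.monomial (Bdeg d) (MvPolynomial.monomial (Edeg s v d) (1:k)) := by
    conv_lhs => rw [g.as_sum]
    rw [map_sum]
    apply Finset.sum_congr rfl
    intro d _
    rw [show MvPolynomial.monomial d (MvPolynomial.coeff d g)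
        = (MvPolynomial.coeff d g) • MvPolynomial.monomial d (1:k) by
      rw [MvPolynomial.smul_monomial, smul_eq_mul, mul_one]]
    rw [map_smul, phi_monomial]
  have hco := congrArg (fun p => MvPolynomial.coeff (Edeg s v d0)
      (Polynomial.coeff p (Bdeg d0))) hg
  rw [hexp] at hco
  simp only [Polynomial.finset_sum_coeff, Polynomial.coeff_smul, Polynomial.coeff_monomial,
    MvPolynomial.coeff_sum, MvPolynomial.coeff_smul, Polynomial.coeff_zero,
    MvPolynomial.coeff_zero] at hco
  rw [Finset.sum_eq_single_of_mem d0 hd0m] at hco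
  · rw [if_pos rfl, MvPolynomial.coeff_monomial, if_pos rfl] at hco
    simp only [smul_eq_mul, mul_one] at hco
    exact hd0 hco
  · intro d hd hdne
    split_ifs with h1
    · rw [MvPolynomial.coeff_monomial]
      split_ifs with h2
      · exact absurd (red_inj d d0 (hred d hd) (hred d0 hd0m) h1 h2) hdne
      · simp
    · simp

private lemma Igen_le_ker :
    Igen k n s v ≤ RingHom.ker (MvPolynomial.aeval (Gmap k n s v) :
      MvPolynomial (Fin n ⊕ Jt n s) k →ₐ[k] Polynomial (MvPolynomial (Fin n) k)).toRingHom := by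
  rw [Igen, Ideal.span_le]
  rintro q ⟨i, j, hij, rfl⟩
  simp only [SetLike.mem_coe, RingHom.mem_ker, AlgHom.toRingHom_eq_coe, RingHom.coe_coe]
  rw [map_sub, map_mul, map_mul, map_pow, map_pow]
  simp only [MvPolynomial.aeval_X, Gmap_def, Sum.elim_inl, Sum.elim_inr]
  rw [← Polynomial.C_pow, ← Polynomial.C_pow]
  ring

private lemma ker_le_Igen (f : MvPolynomial (Fin n ⊕ Jt n s) k)
    (hf : MvPolynomial.aeval (Gmap k n s v) f = 0) : f ∈ Igen k n s v := by
  classical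
  have hred : ∀ d : (Fin n ⊕ Jt n s) →₀ ℕ,
      ∃ e : (Fin n ⊕ Jt n s) →₀ ℕ, Red s v e ∧
        (monomial d 1 - monomial e 1 : MvPolynomial (Fin n ⊕ Jt n s) k) ∈ Igen k n s v :=
    fun d => reduce (mu d) d le_rfl
  choose r hrRed hrMem using hred
  set f' : MvPolynomial (Fin n ⊕ Jt n s) k :=
    ∑ d ∈ f.support, (MvPolynomial.coeff d f) • monomial (r d) 1 with hf'
  have hsub : f - f' ∈ Igen k n s v := by
    have : f - f' = ∑ d ∈ f.support, (MvPolynomial.coeff d f) •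
        (monomial d 1 - monomial (r d) 1) := by
      rw [hf']
      nth_rewrite 1 [f.as_sum]
      rw [← Finset.sum_sub_distrib]
      apply Finset.sum_congr rfl
      intro d _
      simp [smul_sub, MvPolynomial.smul_monomial]
    rw [this]
    apply Ideal.sum_mem
    intro d _
    rw [MvPolynomial.smul_eq_C_mul]
    exact Ideal.mul_mem_left _ _ (hrMem d)
  have hf'0 : MvPolynomial.aeval (Gmap k n s v) f' = 0 := by
    have h1 : MvPolynomial.aeval (Gmap k n s v) (f - f') = 0 := Igen_le_ker hsub
    rw [map_sub, hf] at h1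
    linear_combination -h1
  have hf'red : ∀ e ∈ f'.support, Red s v e := by
    intro e he
    rw [hf'] at he
    have := MvPolynomial.support_sum he
    rw [Finset.mem_biUnion] at this
    obtain ⟨d, _, hd2⟩ := this
    rw [MvPolynomial.smul_monomial, smul_eq_mul, mul_one] at hd2
    have := MvPolynomial.support_monomial_subset hd2
    rw [Finset.mem_singleton] at this
    subst this
    exact hrRed d
  have : f' = 0 := red_support_zero f' hf'red hf'0
  rw [this, sub_zero] at hsub
  exact hsub

end ReesAux

/-- Let `k` be a field, `R = k[x_1,…,x_n]`, `1 ≤ s ≤ n`, and `v_s,…,v_n ≥ 1`.  Let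
`S = R[𝔞T]` be the Rees ring of the ideal `𝔞 = (x_s^{v_s},…,x_n^{v_n})`, realized (via the
injective `k`-algebra homomorphism `ι`) as the `k`-subalgebra of `R[T]` generated by
`x_1,…,x_n` and `x_s^{v_s}T,…,x_n^{v_n}T`.  Then the `k`-algebra homomorphism
`ψ : k[x_1,…,x_n,y_s,…,y_n] → R[𝔞T]`, `x_i ↦ x_i`, `y_j ↦ x_j^{v_j}T`, is surjective and
its kernel is generated by the elements `x_i^{v_i}·y_j − x_j^{v_j}·y_i` for `s ≤ i < j ≤ n`.
(The variable `x_i` of the paper, `1 ≤ i ≤ n`, is indexed by `i' : Fin n` with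
`(i' : ℕ) + 1 = i`; the polynomial variables `x_i` and `y_j` are `X (Sum.inl i)` and
`X (Sum.inr j)` respectively.) -/
theorem statement1 (k : Type) [Field k] (n s : ℕ) (hn : 1 ≤ n) (hs : 1 ≤ s) (hsn : s ≤ n)
    (v : ℕ → ℕ) (hv : ∀ i, s ≤ i → i ≤ n → 1 ≤ v i)
    (S : Type) [CommRing S] [Algebra k S]
    (ι : S →ₐ[k] Polynomial (MvPolynomial (Fin n) k)) (hι : Function.Injective ι)
    (hrange : ι.range = Algebra.adjoin k
      ((Set.range fun i : Fin n => Polynomial.C (MvPolynomial.X i)) ∪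
        {q | ∃ i : Fin n, s ≤ (i : ℕ) + 1 ∧
          q = Polynomial.C (MvPolynomial.X i ^ v ((i : ℕ) + 1)) * Polynomial.X}))
    (xS : Fin n → S)
    (hxS : ∀ i, ι (xS i) = Polynomial.C (MvPolynomial.X i))
    (tS : {i : Fin n // s ≤ (i : ℕ) + 1} → S)
    (htS : ∀ j, ι (tS j) = Polynomial.C (MvPolynomial.X j.1 ^ v ((j.1 : ℕ) + 1)) * Polynomial.X)
    (ψ : MvPolynomial (Fin n ⊕ {i : Fin n // s ≤ (i : ℕ) + 1}) k →ₐ[k] S)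
    (hψ : ψ = MvPolynomial.aeval (Sum.elim xS tS)) :
    Function.Surjective ψ ∧
    RingHom.ker ψ.toRingHom =
      Ideal.span {q | ∃ i j : {i : Fin n // s ≤ (i : ℕ) + 1}, (i.1 : ℕ) < (j.1 : ℕ) ∧
        q = MvPolynomial.X (Sum.inl i.1) ^ v ((i.1 : ℕ) + 1) * MvPolynomial.X (Sum.inr j)
          - MvPolynomial.X (Sum.inl j.1) ^ v ((j.1 : ℕ) + 1) * MvPolynomial.X (Sum.inr i)} := by
  classical
  have hcomp : ι.comp ψ = MvPolynomial.aeval (Gmap k n s v) := by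
    apply MvPolynomial.algHom_ext
    intro x
    cases x with
    | inl i => simp [hψ, Gmap_def, hxS]
    | inr j => simp [hψ, Gmap_def, htS]
  have hcomp' : ∀ p, ι (ψ p) = MvPolynomial.aeval (Gmap k n s v) p := fun p =>
    AlgHom.congr_fun hcomp p
  constructor
  · -- surjectivity
    intro x
    have hx : ι x ∈ ι.range := ⟨x, rfl⟩
    rw [hrange] at hx
    have hset : ((Set.range fun i : Fin n => Polynomial.C (MvPolynomial.X i)) ∪
        {q | ∃ i : Fin n, s ≤ (i : ℕ) + 1 ∧
          q = Polynomial.C (MvPolynomial.X i ^ v ((i : ℕ) + 1)) * Polynomial.X})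
        = Set.range (Gmap k n s v) := by
      rw [Gmap_def, Set.Sum.elim_range]
      congr 1
      ext q
      simp only [Set.mem_range, Set.mem_setOf_eq, Subtype.exists]
      constructor
      · rintro ⟨i, hi, rfl⟩; exact ⟨i, hi, rfl⟩
      · rintro ⟨i, hi, rfl⟩; exact ⟨i, hi, rfl⟩
    rw [hset, Algebra.adjoin_range_eq_range_aeval] at hx
    obtain ⟨p, hp⟩ := hx
    exact ⟨p, hι (by rw [hcomp' p]; exact hp)⟩
  · -- kernel
    have hker : ∀ p, ψ p = 0 ↔ MvPolynomial.aeval (Gmap k n s v) p = 0 := by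
      intro p
      rw [← hcomp' p]
      constructor
      · intro h; rw [h, map_zero]
      · intro h; exact hι (by rw [h, map_zero])
    apply le_antisymm
    · intro p hp
      rw [RingHom.mem_ker] at hp
      exact ker_le_Igen p ((hker p).mp hp)
    · intro p hp
      rw [RingHom.mem_ker]
      exact (hker p).mpr (Igen_le_ker hp)
end

section
/- The R[𝔞T]-module Ω¹_{R[𝔞T]/k} is generated by the 2n−s+1 differentials dx_1,…,dx_n, d(x_s^{v_s}T),…,d(x_n^{v_n}T), and the module of relations among these generators is generated by the binomial(n−s+1, 2) elements d(x_i^{v_i}·(x_j^{v_j}T)) − d(x_j^{v_j}·(x_i^{v_i}T)) for s ≤ i < j ≤ n; equivalently, Ω¹_{R[𝔞T]/k} is isomorphic to the cokernel of the R[𝔞T]-linear map R[𝔞T]^{binom(n−s+1,2)} → R[𝔞T]^{2n−s+1} whose column indexed by a pair {i,j} with s ≤ i < j ≤ n has entry v_i·x_i^{v_i−1}·(x_j^{v_j}T) in the coordinate of dx_i, entry −v_j·x_j^{v_j−1}·(x_i^{v_i}T) in the coordinate of dx_j, entry x_i^{v_i} in the coordinate of d(x_j^{v_j}T), entry −x_j^{v_j}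 in the coordinate of d(x_i^{v_i}T), and zero elsewhere. -/
open MvPolynomial
namespace S2
variable {k : Type} [Field k] {n s : ℕ}

abbrev Vars (n s : ℕ) := Fin n ⊕ {i : Fin n // s ≤ (i : ℕ) + 1}
abbrev Rel (n s : ℕ) := {q : Fin n × Fin n // s ≤ (q.1 : ℕ) + 1 ∧ (q.1 : ℕ) < (q.2 : ℕ)}

/-- first member of a relation pair as an element of the subtype -/
def iJ (r : Rel n s) : {i : Fin n // s ≤ (i : ℕ) + 1} := ⟨r.1.1, r.2.1⟩
def jJ (r : Rel n s) : {i : Fin n // s ≤ (i : ℕ) + 1} :=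
  ⟨r.1.2, by obtain ⟨h1, h2⟩ := r.2; omega⟩

variable (k) in
noncomputable def π (n s : ℕ) (v : ℕ → ℕ) :
    MvPolynomial (Vars n s) k →ₐ[k] Polynomial (MvPolynomial (Fin n) k) :=
  aeval (Sum.elim (fun i => Polynomial.C (X i))
    (fun j => Polynomial.C (X j.1 ^ v ((j.1 : ℕ) + 1)) * Polynomial.X))

variable (k) in
/-- the Koszul binomial relations -/
noncomputable def g (v : ℕ → ℕ) (r : Rel n s) : MvPolynomial (Vars n s) k :=
  X (Sum.inl r.1.1) ^ v ((r.1.1 : ℕ) + 1) * X (Sum.inr (jJ r))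
    - X (Sum.inl r.1.2) ^ v ((r.1.2 : ℕ) + 1) * X (Sum.inr (iJ r))

def dd (u : Vars n s →₀ ℕ) : ℕ := ∑ j : {i : Fin n // s ≤ (i : ℕ) + 1}, u (Sum.inr j)

noncomputable def E (v : ℕ → ℕ) (u : Vars n s →₀ ℕ) : Fin n →₀ ℕ :=
  Finsupp.equivFunOnFinite.symm (fun i => u (Sum.inl i) +
    (if h : s ≤ (i : ℕ) + 1 then v ((i : ℕ) + 1) * u (Sum.inr ⟨i, h⟩) else 0))

variable {v : ℕ → ℕ}

lemma E_apply (u : Vars n s →₀ ℕ) (i : Fin n) : E v u i = u (Sum.inl i) +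
    (if h : s ≤ (i : ℕ) + 1 then v ((i : ℕ) + 1) * u (Sum.inr ⟨i, h⟩) else 0) := rfl

lemma dd_add (u w : Vars n s →₀ ℕ) : dd (u + w) = dd u + dd w := by
  simp [dd, Finset.sum_add_distrib]

lemma E_add (u w : Vars n s →₀ ℕ) : E v (u + w) = E v u + E v w := by
  ext i; simp only [E_apply, Finsupp.add_apply]; split <;> ring

lemma E_single_inl (i : Fin n) (m : ℕ) :
    E v (Finsupp.single (Sum.inl i : Vars n s) m) = Finsupp.single i m := by
  ext i'
  simp only [E_apply, Finsupp.single_apply]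
  by_cases h : i = i' <;> split_ifs <;> simp_all <;> omega

lemma E_single_inr (j : {i : Fin n // s ≤ (i : ℕ) + 1}) (m : ℕ) :
    E v (Finsupp.single (Sum.inr j : Vars n s) m) = Finsupp.single j.1 (v ((j.1 : ℕ) + 1) * m) := by
  ext i'
  simp only [E_apply, Finsupp.single_apply]
  have h1 : ((Sum.inr j : Vars n s) = Sum.inl i') = False := by simp
  by_cases h : j.1 = i'
  · subst h
    rw [dif_pos j.2]
    simp [Subtype.ext_iff, h1]
  · rw [if_neg h]
    split_ifs <;> simp_all [Subtype.ext_iff]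

lemma dd_single_inl (i : Fin n) (m : ℕ) : dd (Finsupp.single (Sum.inl i : Vars n s) m) = 0 := by
  simp [dd, Finsupp.single_apply]

lemma dd_single_inr (j : {i : Fin n // s ≤ (i : ℕ) + 1}) (m : ℕ) :
    dd (Finsupp.single (Sum.inr j : Vars n s) m) = m := by
  rw [dd, Finset.sum_eq_single j]
  · simp
  · intro b _ hb
    simp only [Finsupp.single_apply, Sum.inr.injEq, ite_eq_right_iff]
    intro e; exact absurd e.symm hb
  · simp


lemma E_zero : E v (0 : Vars n s →₀ ℕ) = 0 := by
  ext i; simp [E_apply]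

lemma dd_zero : dd (0 : Vars n s →₀ ℕ) = 0 := by simp [dd]

lemma pi_X_inl (i : Fin n) :
    π k n s v (X (Sum.inl i)) = Polynomial.C (X i) := aeval_X _ _

lemma pi_X_inr (j : {i : Fin n // s ≤ (i : ℕ) + 1}) :
    π k n s v (X (Sum.inr j)) = Polynomial.C (X j.1 ^ v ((j.1 : ℕ) + 1)) * Polynomial.X :=
  aeval_X _ _

lemma pi_monomial_single (a : Vars n s) (m : ℕ) :
    π k n s v (monomial (Finsupp.single a m) (1 : k)) =
      Polynomial.C (monomial (E v (Finsupp.single a m)) (1 : k)) *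
        Polynomial.X ^ dd (Finsupp.single a m) := by
  cases a with
  | inl i =>
    rw [E_single_inl, dd_single_inl, ← X_pow_eq_monomial, ← X_pow_eq_monomial, map_pow,
      pi_X_inl, pow_zero, mul_one, Polynomial.C_pow]
  | inr j =>
    rw [E_single_inr, dd_single_inr, ← X_pow_eq_monomial, ← X_pow_eq_monomial, map_pow,
      pi_X_inr, mul_pow, ← Polynomial.C_pow, ← pow_mul]

lemma pi_monomial (u : Vars n s →₀ ℕ) :
    π k n s v (monomial u (1 : k)) =
      Polynomial.C (monomial (E v u) (1 : k)) * Polynomial.X ^ dd u := by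
  induction u using Finsupp.induction with
  | zero =>
    rw [E_zero, dd_zero, monomial_zero', monomial_zero', C_1, map_one, C_1, Polynomial.C_1,
      pow_zero, mul_one]
  | single_add a b f ha hb ih =>
    have h1 : (monomial (Finsupp.single a b + f) (1 : k)) =
        monomial (Finsupp.single a b) (1 : k) * monomial f 1 := by
      rw [monomial_mul, one_mul]
    rw [h1, map_mul, ih, pi_monomial_single, E_add, dd_add, pow_add]
    rw [show monomial (E v (Finsupp.single a b) + E v f) (1 : k) =
      monomial (E v (Finsupp.single a b)) 1 * monomial (E v f) 1 by rw [monomial_mul, one_mul]]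
    rw [map_mul]
    ring

lemma pi_monomial_eq_iff (u w : Vars n s →₀ ℕ) :
    π k n s v (monomial u (1 : k)) = π k n s v (monomial w 1) ↔
      E v u = E v w ∧ dd u = dd w := by
  constructor
  · intro h
    rw [pi_monomial, pi_monomial] at h
    have h2 := congrArg (fun p => Polynomial.coeff p (dd u)) h
    simp only [Polynomial.coeff_C_mul, Polynomial.coeff_X_pow, eq_self_iff_true, if_true,
      mul_one] at h2
    by_cases hd : dd u = dd w
    · rw [if_pos hd, mul_one] at h2
      rcases (monomial_eq_monomial_iff _ _ _ _).mp h2 with ⟨h3, _⟩ | ⟨h3, _⟩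
      · exact ⟨h3, hd⟩
      · exact absurd h3 one_ne_zero
    · rw [if_neg hd, mul_zero] at h2
      exact absurd (monomial_eq_zero.mp h2) one_ne_zero
  · rintro ⟨h1, h2⟩
    rw [pi_monomial, pi_monomial, h1, h2]


lemma monomial_mul_g (base : Vars n s →₀ ℕ) (r : Rel n s) :
    monomial base (1 : k) * g k v r =
      monomial (base + (Finsupp.single (Sum.inl r.1.1) (v ((r.1.1 : ℕ) + 1)) +
        Finsupp.single (Sum.inr (jJ r)) 1)) 1 -
      monomial (base + (Finsupp.single (Sum.inl r.1.2) (v ((r.1.2 : ℕ) + 1)) +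
        Finsupp.single (Sum.inr (iJ r)) 1)) 1 := by
  have hX : ∀ a : Vars n s, (X a : MvPolynomial (Vars n s) k) =
      monomial (Finsupp.single a 1) 1 := fun a => by
    rw [← pow_one (X a), X_pow_eq_monomial]
  rw [g, mul_sub, X_pow_eq_monomial, X_pow_eq_monomial, hX, hX, monomial_mul, monomial_mul,
    monomial_mul, monomial_mul, one_mul, one_mul]

lemma exists_decomp_one (w : Vars n s →₀ ℕ) (a : Vars n s) (q : ℕ) (h : q ≤ w a) :
    ∃ base, w = base + Finsupp.single a q := by
  refine ⟨w - Finsupp.single a q, ?_⟩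
  ext c
  simp only [Finsupp.add_apply, Finsupp.tsub_apply, Finsupp.single_apply]
  rcases eq_or_ne a c with rfl | ha
  · rw [if_pos rfl]; omega
  · rw [if_neg ha]; omega

lemma exists_decomp_two (w : Vars n s →₀ ℕ) (a b : Vars n s) (hab : a ≠ b) (p q : ℕ)
    (h1 : p ≤ w a) (h2 : q ≤ w b) :
    ∃ base, w = base + (Finsupp.single a p + Finsupp.single b q) := by
  refine ⟨w - Finsupp.single a p - Finsupp.single b q, ?_⟩
  ext c
  simp only [Finsupp.add_apply, Finsupp.tsub_apply, Finsupp.single_apply]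
  rcases eq_or_ne a c with rfl | ha
  · rw [if_pos rfl, if_neg (fun h => hab h.symm)]; omega
  · rw [if_neg ha]
    rcases eq_or_ne b c with rfl | hb
    · rw [if_pos rfl]; omega
    · rw [if_neg hb]; omega

lemma exists_pos_of_dd_pos (u : Vars n s →₀ ℕ) (h : 0 < dd u) :
    ∃ j, 0 < u (Sum.inr j) := by
  by_contra hc
  push_neg at hc
  simp only [Nat.le_zero] at hc
  rw [dd, Finset.sum_eq_zero (fun j _ => hc j)] at h
  omega

lemma bin (d : ℕ) : ∀ u w : Vars n s →₀ ℕ, dd u = d → dd w = d → E v u = E v w →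
    monomial u (1 : k) - monomial w 1 ∈
      Ideal.span (Set.range (g k v : Rel n s → MvPolynomial (Vars n s) k)) := by
  induction d with
  | zero =>
    intro u w hu hw hE
    have hu0 : ∀ j, u (Sum.inr j) = 0 := by
      intro j
      have := (Finset.sum_eq_zero_iff.mp hu) j (Finset.mem_univ j)
      exact this
    have hw0 : ∀ j, w (Sum.inr j) = 0 := by
      intro j
      exact (Finset.sum_eq_zero_iff.mp hw) j (Finset.mem_univ j)
    have : u = w := by
      ext a
      cases a with
      | inl i =>
        have h := DFunLike.congr_fun hE i
        rw [E_apply, E_apply] at h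
        split_ifs at h with hc
        · rw [hu0 ⟨i, hc⟩, hw0 ⟨i, hc⟩] at h; simpa using h
        · simpa using h
      | inr j => rw [hu0 j, hw0 j]
    rw [this, sub_self]
    exact zero_mem _
  | succ d ih =>
    intro u w hu hw hE
    classical
    -- find the minimal index with a positive Y-coordinate
    obtain ⟨j, hj⟩ := exists_pos_of_dd_pos u (by omega)
    have hFne : (Finset.univ.filter
        (fun j' : {i : Fin n // s ≤ (i : ℕ) + 1} =>
          0 < u (Sum.inr j') + w (Sum.inr j'))).Nonempty :=
      ⟨j, by simp; omega⟩
    obtain ⟨j₀, hj₀F, hmin⟩ := Finset.exists_min_image _ (fun j' => (j'.1 : ℕ)) hFne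
    have hj₀pos : 0 < u (Sum.inr j₀) + w (Sum.inr j₀) := by
      simpa using hj₀F
    have hlow : ∀ j' : {i : Fin n // s ≤ (i : ℕ) + 1}, (j'.1 : ℕ) < (j₀.1 : ℕ) →
        u (Sum.inr j') = 0 ∧ w (Sum.inr j') = 0 := by
      intro j' hj'
      by_contra hc
      have hj'F : j' ∈ Finset.univ.filter
          (fun j'' : {i : Fin n // s ≤ (i : ℕ) + 1} =>
            0 < u (Sum.inr j'') + w (Sum.inr j'')) := by
        simp only [Finset.mem_filter, Finset.mem_univ, true_and]
        omega
      exact absurd (hmin j' hj'F) (by omega)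
    -- step: make the j₀ coordinate positive
    have getpos : ∀ u' w' : Vars n s →₀ ℕ, dd u' = d + 1 → dd w' = d + 1 →
        E v u' = E v w' →
        (∀ j' : {i : Fin n // s ≤ (i : ℕ) + 1}, (j'.1 : ℕ) < (j₀.1 : ℕ) →
          u' (Sum.inr j') = 0) →
        0 < u' (Sum.inr j₀) + w' (Sum.inr j₀) →
        ∃ u₂, monomial u' (1 : k) - monomial u₂ 1 ∈
            Ideal.span (Set.range (g k v : Rel n s → MvPolynomial (Vars n s) k)) ∧
          dd u₂ = d + 1 ∧ E v u₂ = E v u' ∧ 0 < u₂ (Sum.inr j₀) := by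
      intro u' w' hu' hw' hE' hlowu hpos
      by_cases hup : 0 < u' (Sum.inr j₀)
      · exact ⟨u', by rw [sub_self]; exact zero_mem _, hu', rfl, hup⟩
      -- u' (inr j₀) = 0, w' (inr j₀) > 0
      have huj : u' (Sum.inr j₀) = 0 := by omega
      have hwj : 0 < w' (Sum.inr j₀) := by omega
      have hEj := DFunLike.congr_fun hE' j₀.1
      rw [E_apply, E_apply, dif_pos j₀.2, dif_pos j₀.2] at hEj
      simp only [Subtype.coe_eta] at hEj
      rw [huj, mul_zero, add_zero] at hEj
      have hmul : v ((j₀.1 : ℕ) + 1) ≤ v ((j₀.1 : ℕ) + 1) * w' (Sum.inr j₀) :=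
        Nat.le_mul_of_pos_right _ hwj
      have hvle : v ((j₀.1 : ℕ) + 1) ≤ u' (Sum.inl j₀.1) := by omega
      obtain ⟨l, hl⟩ := exists_pos_of_dd_pos u' (by omega)
      have hll : (j₀.1 : ℕ) < (l.1 : ℕ) := by
        rcases lt_trichotomy ((l.1 : ℕ)) ((j₀.1 : ℕ)) with h | h | h
        · exact absurd (hlowu l h) (by omega)
        · have : l = j₀ := Subtype.ext (Fin.ext h)
          rw [this, huj] at hl
          omega
        · exact h
      have hne : (Sum.inl j₀.1 : Vars n s) ≠ Sum.inr l := by simp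
      obtain ⟨base, hbase⟩ := exists_decomp_two u' _ _ hne _ 1 hvle hl
      set r : Rel n s := ⟨(j₀.1, l.1), j₀.2, hll⟩ with hr
      have hjJ : jJ r = l := Subtype.ext rfl
      have hiJ : iJ r = j₀ := Subtype.ext rfl
      refine ⟨base + (Finsupp.single (Sum.inl l.1) (v ((l.1 : ℕ) + 1)) +
        Finsupp.single (Sum.inr j₀) 1), ?_, ?_, ?_, ?_⟩
      · have hmg := monomial_mul_g (k := k) (v := v) base r
        rw [hjJ, hiJ] at hmg
        have : monomial u' (1 : k) - monomial (base +
            (Finsupp.single (Sum.inl l.1) (v ((l.1 : ℕ) + 1)) +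
              Finsupp.single (Sum.inr j₀) 1)) 1 = monomial base 1 * g k v r := by
          rw [hmg, hbase]
        rw [this]
        exact Ideal.mul_mem_left _ _ (Ideal.subset_span ⟨r, rfl⟩)
      · rw [dd_add, dd_add, dd_single_inl, dd_single_inr, ← hu', hbase, dd_add, dd_add,
          dd_single_inl, dd_single_inr]
      · rw [E_add, E_add, E_single_inl, E_single_inr, hbase, E_add, E_add, E_single_inl,
          E_single_inr, mul_one, mul_one]
        abel
      · simp [Finsupp.single_apply]
    obtain ⟨u₂, hu₂mem, hu₂dd, hu₂E, hu₂pos⟩ :=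
      getpos u w hu hw hE (fun j' h => (hlow j' h).1) hj₀pos
    obtain ⟨w₂, hw₂mem, hw₂dd, hw₂E, hw₂pos⟩ :=
      getpos w u hw hu hE.symm (fun j' h => (hlow j' h).2) (by omega)
    obtain ⟨u₃, hu₃⟩ := exists_decomp_one u₂ (Sum.inr j₀) 1 hu₂pos
    obtain ⟨w₃, hw₃⟩ := exists_decomp_one w₂ (Sum.inr j₀) 1 hw₂pos
    have hd₃u : dd u₃ = d := by
      have := hu₂dd
      rw [hu₃, dd_add, dd_single_inr] at this
      omega
    have hd₃w : dd w₃ = d := by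
      have := hw₂dd
      rw [hw₃, dd_add, dd_single_inr] at this
      omega
    have hE₃ : E v u₃ = E v w₃ := by
      have h1 : E v u₂ = E v w₂ := by rw [hu₂E, hw₂E, hE]
      rw [hu₃, hw₃, E_add, E_add] at h1
      exact add_right_cancel h1
    have hmem₃ := ih u₃ w₃ hd₃u hd₃w hE₃
    have hmem₂ : monomial u₂ (1 : k) - monomial w₂ 1 ∈
        Ideal.span (Set.range (g k v : Rel n s → MvPolynomial (Vars n s) k)) := by
      have heq : monomial u₂ (1 : k) - monomial w₂ 1 =
          monomial (Finsupp.single (Sum.inr j₀ : Vars n s) 1) 1 *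
            (monomial u₃ 1 - monomial w₃ 1) := by
        rw [mul_sub, monomial_mul, monomial_mul, one_mul, hu₃, hw₃]
        rw [add_comm u₃, add_comm w₃]
      rw [heq]
      exact Ideal.mul_mem_left _ _ hmem₃
    have hsplit : monomial u (1 : k) - monomial w 1 =
        (monomial u 1 - monomial u₂ 1) + (monomial u₂ 1 - monomial w₂ 1) -
          (monomial w 1 - monomial w₂ 1) := by ring
    rw [hsplit]
    exact sub_mem (add_mem hu₂mem hmem₂) hw₂mem


lemma coeff_pi_monomial (u₀ w : Vars n s →₀ ℕ) (c : k) :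
    MvPolynomial.coeff (E v u₀) ((π k n s v (monomial w c)).coeff (dd u₀)) =
      if E v w = E v u₀ ∧ dd w = dd u₀ then c else 0 := by
  classical
  have h1 : monomial w c = C c * monomial w 1 := by rw [C_mul_monomial, mul_one]
  have h2 : π k n s v (C c) = Polynomial.C (MvPolynomial.C c) := by
    rw [π, aeval_C]
    rfl
  rw [h1, map_mul, pi_monomial, h2, ← mul_assoc, ← Polynomial.C_mul,
    Polynomial.coeff_C_mul, Polynomial.coeff_X_pow, mul_ite, mul_one, mul_zero]
  by_cases hd : dd u₀ = dd w
  · rw [if_pos hd, MvPolynomial.coeff_C_mul, coeff_monomial]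
    by_cases hE : E v w = E v u₀
    · rw [if_pos hE, if_pos ⟨hE, hd.symm⟩, mul_one]
    · rw [if_neg hE, if_neg (fun hc => hE hc.1), mul_zero]
  · rw [if_neg hd, if_neg (fun hc => hd hc.2.symm)]
    simp


lemma ker_pi_le : ∀ (c : ℕ) (f : MvPolynomial (Vars n s) k), f.support.card ≤ c →
    π k n s v f = 0 →
    f ∈ Ideal.span (Set.range (g k v : Rel n s → MvPolynomial (Vars n s) k)) := by
  intro c
  induction c with
  | zero =>
    intro f hcard _
    have : f = 0 := by
      rw [← support_eq_empty, ← Finset.card_eq_zero]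
      omega
    rw [this]
    exact zero_mem _
  | succ c ihc =>
    intro f hcard hf
    classical
    by_cases hf0 : f = 0
    · rw [hf0]; exact zero_mem _
    obtain ⟨u₀, hu₀⟩ := (support_nonempty.mpr hf0)
    set A : Finset (Vars n s →₀ ℕ) :=
      f.support.filter (fun w => E v w = E v u₀ ∧ dd w = dd u₀) with hA
    have hu₀A : u₀ ∈ A := by
      rw [hA, Finset.mem_filter]
      exact ⟨hu₀, rfl, rfl⟩
    have hAsub : A ⊆ f.support := Finset.filter_subset _ _
    -- the sum of the coefficients over the fiber A vanishes
    have hsum : ∑ w ∈ A, MvPolynomial.coeff w f = 0 := by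
      have h0 : MvPolynomial.coeff (E v u₀) ((π k n s v f).coeff (dd u₀)) = 0 := by
        rw [hf]; simp
      have hfs : π k n s v f =
          ∑ w ∈ f.support, π k n s v (monomial w (MvPolynomial.coeff w f)) := by
        rw [← map_sum, support_sum_monomial_coeff]
      rw [hfs, Polynomial.finset_sum_coeff] at h0
      rw [show MvPolynomial.coeff (E v u₀)
          (∑ w ∈ f.support, (π k n s v (monomial w (MvPolynomial.coeff w f))).coeff (dd u₀)) =
          ∑ w ∈ f.support, MvPolynomial.coeff (E v u₀)
            ((π k n s v (monomial w (MvPolynomial.coeff w f))).coeff (dd u₀)) from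
        map_sum (MvPolynomial.coeffAddMonoidHom (E v u₀)) _ _] at h0
      rw [Finset.sum_congr rfl (fun w _ => coeff_pi_monomial u₀ w _)] at h0
      rw [← Finset.sum_filter] at h0
      exact h0.symm ▸ h0
    set h : MvPolynomial (Vars n s) k :=
      ∑ w ∈ A, C (MvPolynomial.coeff w f) * (monomial w 1 - monomial u₀ 1) with hh
    have hhmem : h ∈ Ideal.span (Set.range (g k v : Rel n s → MvPolynomial (Vars n s) k)) := by
      refine Submodule.sum_mem _ (fun w hw => Ideal.mul_mem_left _ _ ?_)
      rw [hA, Finset.mem_filter] at hw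
      exact bin (dd u₀) w u₀ hw.2.2 rfl hw.2.1
    have hhval : h = ∑ w ∈ A, monomial w (MvPolynomial.coeff w f) := by
      rw [hh]
      have e1 : ∀ w ∈ A, C (MvPolynomial.coeff w f) * (monomial w 1 - monomial u₀ 1) =
          monomial w (MvPolynomial.coeff w f) - C (MvPolynomial.coeff w f) * monomial u₀ 1 := by
        intro w _
        rw [mul_sub, C_mul_monomial, mul_one]
      rw [Finset.sum_congr rfl e1, Finset.sum_sub_distrib, ← Finset.sum_mul, ← map_sum, hsum,
        map_zero, zero_mul, sub_zero]
    have hpih : π k n s v h = 0 := by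
      rw [hh, map_sum]
      refine Finset.sum_eq_zero (fun w hw => ?_)
      rw [hA, Finset.mem_filter] at hw
      rw [map_mul, map_sub, (pi_monomial_eq_iff w u₀).mpr ⟨hw.2.1, hw.2.2⟩, sub_self, mul_zero]
    have hsupp : (f - h).support ⊆ f.support \ A := by
      intro a ha
      rw [mem_support_iff] at ha
      have hcoeff : MvPolynomial.coeff a (f - h) = MvPolynomial.coeff a f -
          (if a ∈ A then MvPolynomial.coeff a f else 0) := by
        rw [MvPolynomial.coeff_sub, hhval,
          show MvPolynomial.coeff a (∑ w ∈ A, monomial w (MvPolynomial.coeff w f)) =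
            ∑ w ∈ A, MvPolynomial.coeff a (monomial w (MvPolynomial.coeff w f)) from
          map_sum (MvPolynomial.coeffAddMonoidHom a) _ _]
        congr 1
        rw [Finset.sum_congr rfl (fun w _ => coeff_monomial a w _), Finset.sum_ite_eq']
      rw [Finset.mem_sdiff]
      by_cases haA : a ∈ A
      · rw [if_pos haA] at hcoeff
        rw [hcoeff] at ha
        simp at ha
      · rw [if_neg haA, sub_zero] at hcoeff
        rw [hcoeff] at ha
        exact ⟨mem_support_iff.mpr ha, haA⟩
    have hcard2 : (f - h).support.card ≤ c := by
      have h2 : 1 ≤ A.card := Finset.card_pos.mpr ⟨u₀, hu₀A⟩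
      have h3 := Finset.card_le_card hsupp
      rw [Finset.card_sdiff_of_subset hAsub] at h3
      omega
    have hmem : f - h ∈ Ideal.span (Set.range (g k v : Rel n s → MvPolynomial (Vars n s) k)) :=
      ihc (f - h) hcard2 (by rw [map_sub, hf, hpih, sub_zero])
    have hfe : f = (f - h) + h := by ring
    rw [hfe]
    exact add_mem hmem hhmem

lemma tmul_smul_aux {R A B : Type*} [CommRing R] [CommRing A] [CommRing B] [Algebra R A]
    [Algebra A B] (c : A) (m : Ω[A⁄R]) :
    (1 : B) ⊗ₜ[A] (c • m) = (algebraMap A B c) • ((1 : B) ⊗ₜ[A] m) := by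
  rw [← TensorProduct.smul_tmul, TensorProduct.smul_tmul', Algebra.smul_def, mul_one,
    smul_eq_mul, mul_one]

end S2





/-- Let `k` be a field, `R = k[x_1,…,x_n]`, `1 ≤ s ≤ n`, `v_s,…,v_n ≥ 1`, and let
`S = R[𝔞T]` be the Rees ring of `𝔞 = (x_s^{v_s},…,x_n^{v_n})`, realized (via the injective
`k`-algebra homomorphism `ι`) as the `k`-subalgebra of `R[T]` generated by `x_1,…,x_n` and
`x_s^{v_s}T,…,x_n^{v_n}T`.  Then `Ω¹_{S/k}` is generated by the `2n−s+1` differentials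
`dx_1,…,dx_n, d(x_s^{v_s}T),…,d(x_n^{v_n}T)`, with module of relations generated by the
`binom(n−s+1,2)` elements `d(x_i^{v_i}·(x_j^{v_j}T)) − d(x_j^{v_j}·(x_i^{v_i}T))` for
`s ≤ i < j ≤ n`; i.e. `Ω¹_{S/k}` is the cokernel of the `S`-linear map given by the matrix
`M` whose column indexed by a pair `{i,j}` (with `s ≤ i < j ≤ n`) has entry
`v_i·x_i^{v_i−1}·(x_j^{v_j}T)` in the row of `dx_i`, entry `−v_j·x_j^{v_j−1}·(x_i^{v_i}T)`
in the row of `dx_j`, entry `x_i^{v_i}` in the row of `d(x_j^{v_j}T)`, entry `−x_j^{v_j}`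
in the row of `d(x_i^{v_i}T)`, and zero elsewhere.
(The variable `x_i` of the paper, `1 ≤ i ≤ n`, is indexed by `i' : Fin n` with
`(i' : ℕ) + 1 = i`; the rows are indexed by `Fin n ⊕ {i // s ≤ i+1}`, the first summand
for the `dx_i` and the second for the `d(x_i^{v_i}T)`.) -/
theorem statement2 (k : Type) [Field k] (n s : ℕ) (hn : 1 ≤ n) (hs : 1 ≤ s) (hsn : s ≤ n)
    (v : ℕ → ℕ) (hv : ∀ i, s ≤ i → i ≤ n → 1 ≤ v i)
    (S : Type) [CommRing S] [Algebra k S]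
    (ι : S →ₐ[k] Polynomial (MvPolynomial (Fin n) k)) (hι : Function.Injective ι)
    (hrange : ι.range = Algebra.adjoin k
      ((Set.range fun i : Fin n => Polynomial.C (MvPolynomial.X i)) ∪
        {q | ∃ i : Fin n, s ≤ (i : ℕ) + 1 ∧
          q = Polynomial.C (MvPolynomial.X i ^ v ((i : ℕ) + 1)) * Polynomial.X}))
    (xS : Fin n → S)
    (hxS : ∀ i, ι (xS i) = Polynomial.C (MvPolynomial.X i))
    (tS : {i : Fin n // s ≤ (i : ℕ) + 1} → S)
    (htS : ∀ j, ι (tS j) = Polynomial.C (MvPolynomial.X j.1 ^ v ((j.1 : ℕ) + 1)) * Polynomial.X)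
    (M : Matrix (Fin n ⊕ {i : Fin n // s ≤ (i : ℕ) + 1})
      {q : Fin n × Fin n // s ≤ (q.1 : ℕ) + 1 ∧ (q.1 : ℕ) < (q.2 : ℕ)} S)
    (hM₁ : ∀ rel, M (Sum.inl rel.1.1) rel =
      (v ((rel.1.1 : ℕ) + 1) : S) * xS rel.1.1 ^ (v ((rel.1.1 : ℕ) + 1) - 1) *
        tS ⟨rel.1.2, by obtain ⟨h1, h2⟩ := rel.2; omega⟩)
    (hM₂ : ∀ rel, M (Sum.inl rel.1.2) rel =
      -((v ((rel.1.2 : ℕ) + 1) : S) * xS rel.1.2 ^ (v ((rel.1.2 : ℕ) + 1) - 1) *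
        tS ⟨rel.1.1, rel.2.1⟩))
    (hM₃ : ∀ rel, M (Sum.inr ⟨rel.1.2, by obtain ⟨h1, h2⟩ := rel.2; omega⟩) rel =
      xS rel.1.1 ^ v ((rel.1.1 : ℕ) + 1))
    (hM₄ : ∀ rel, M (Sum.inr ⟨rel.1.1, rel.2.1⟩) rel =
      -(xS rel.1.2 ^ v ((rel.1.2 : ℕ) + 1)))
    (hM₅ : ∀ rel, ∀ a : Fin n, a ≠ rel.1.1 → a ≠ rel.1.2 → M (Sum.inl a) rel = 0)
    (hM₆ : ∀ rel, ∀ b : {i : Fin n // s ≤ (i : ℕ) + 1}, b.1 ≠ rel.1.1 → b.1 ≠ rel.1.2 →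
      M (Sum.inr b) rel = 0) :
    ∃ φ : ((Fin n ⊕ {i : Fin n // s ≤ (i : ℕ) + 1}) → S) →ₗ[S] KaehlerDifferential k S,
      (∀ i : Fin n, φ (Pi.single (Sum.inl i) 1) = KaehlerDifferential.D k S (xS i)) ∧
      (∀ j : {i : Fin n // s ≤ (i : ℕ) + 1},
        φ (Pi.single (Sum.inr j) 1) = KaehlerDifferential.D k S (tS j)) ∧
      Function.Surjective φ ∧
      LinearMap.ker φ = LinearMap.range M.mulVecLin := by
  classical
  set gens : S2.Vars n s → S := Sum.elim xS tS with hgens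
  have hcomm : ∀ p : MvPolynomial (S2.Vars n s) k, ι ((aeval gens) p) = S2.π k n s v p := by
    intro p
    have h : (ι.comp (aeval gens)) = S2.π k n s v := by
      apply MvPolynomial.algHom_ext
      intro a
      cases a with
      | inl i =>
        simp only [AlgHom.comp_apply, aeval_X]
        rw [show gens (Sum.inl i) = xS i from rfl, hxS i, S2.pi_X_inl]
      | inr j =>
        simp only [AlgHom.comp_apply, aeval_X]
        rw [show gens (Sum.inr j) = tS j from rfl, htS j, S2.pi_X_inr]
    exact AlgHom.congr_fun h p
  have hadj : Algebra.adjoin k (Set.range gens) = ⊤ := by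
    rw [eq_top_iff]
    intro y _
    have h1 : ι y ∈ ι.range := ⟨y, rfl⟩
    rw [hrange] at h1
    have h2 : ((Set.range fun i : Fin n => Polynomial.C (MvPolynomial.X i)) ∪
        {q | ∃ i : Fin n, s ≤ (i : ℕ) + 1 ∧
          q = Polynomial.C (MvPolynomial.X i ^ v ((i : ℕ) + 1)) * Polynomial.X}) =
        ι '' Set.range gens := by
      ext q
      constructor
      · rintro (⟨i, rfl⟩ | ⟨i, hi, rfl⟩)
        · exact ⟨xS i, ⟨Sum.inl i, rfl⟩, hxS i⟩
        · exact ⟨tS ⟨i, hi⟩, ⟨Sum.inr ⟨i, hi⟩, rfl⟩, htS ⟨i, hi⟩⟩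
      · rintro ⟨x, ⟨a, rfl⟩, rfl⟩
        cases a with
        | inl i => exact Or.inl ⟨i, (hxS i).symm⟩
        | inr j => exact Or.inr ⟨j.1, j.2, htS j⟩
    rw [h2, ← AlgHom.map_adjoin] at h1
    rw [Subalgebra.mem_map] at h1
    obtain ⟨z, hz, hzy⟩ := h1
    rwa [← hι hzy]
  have hsurj : Function.Surjective (aeval gens : MvPolynomial (S2.Vars n s) k →ₐ[k] S) := by
    rw [← AlgHom.range_eq_top, ← Algebra.adjoin_range_eq_range_aeval, hadj]
  set P : Algebra.Generators k S (S2.Vars n s) := Algebra.Generators.ofSurjective gens hsurj with hP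
  have hval : P.val = gens := rfl
  have hgker : ∀ r : S2.Rel n s, (S2.g k v r : MvPolynomial (S2.Vars n s) k) ∈ P.ker := by
    intro r
    rw [Algebra.Generators.ker_eq_ker_aeval_val, RingHom.mem_ker]
    apply hι
    show ι ((aeval gens) (S2.g k v r)) = ι 0
    rw [hcomm, map_zero]
    rw [S2.g, map_sub, map_mul, map_mul, map_pow, map_pow, S2.pi_X_inl, S2.pi_X_inl,
      S2.pi_X_inr, S2.pi_X_inr]
    simp only [S2.jJ, S2.iJ]
    rw [← Polynomial.C_pow, ← Polynomial.C_pow]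
    ring
  have hker : P.ker =
      Ideal.span (Set.range (S2.g k v : S2.Rel n s → MvPolynomial (S2.Vars n s) k)) := by
    apply le_antisymm
    · intro x hx
      rw [Algebra.Generators.ker_eq_ker_aeval_val, RingHom.mem_ker] at hx
      refine S2.ker_pi_le x.support.card x le_rfl ?_
      rw [← hcomm x, show (aeval gens) x = 0 from hx, map_zero]
    · rw [Ideal.span_le]
      rintro _ ⟨r, rfl⟩
      exact hgker r
  set b := P.cotangentSpaceBasis with hb
  set w : S2.Rel n s → P.toExtension.CotangentSpace :=
    fun r => (1 : S) ⊗ₜ[P.toExtension.Ring]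
      (KaehlerDifferential.D k P.toExtension.Ring) (S2.g k v r) with hw
  set N₀ : Submodule S P.toExtension.CotangentSpace := Submodule.span S (Set.range w) with hN₀
  have hrangeCC : LinearMap.range P.toExtension.cotangentComplex = N₀ := by
    apply le_antisymm
    · rintro _ ⟨y, rfl⟩
      obtain ⟨x, rfl⟩ := Algebra.Extension.Cotangent.mk_surjective y
      rw [Algebra.Extension.cotangentComplex_mk]
      have hx : (x : P.toExtension.Ring) ∈
          (Ideal.span (Set.range (S2.g k v : S2.Rel n s → MvPolynomial (S2.Vars n s) k)) :
            Ideal P.toExtension.Ring) := by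
        have hx0 : x.1 ∈ P.ker := x.2
        rw [hker] at hx0; exact hx0
      refine Submodule.span_induction (p := fun z _ =>
        ((1 : S) ⊗ₜ[P.toExtension.Ring] (KaehlerDifferential.D k P.toExtension.Ring) z) ∈ N₀)
        ?_ ?_ ?_ ?_ hx
      · rintro _ ⟨r, rfl⟩
        exact Submodule.subset_span ⟨r, rfl⟩
      · show ((1 : S) ⊗ₜ[P.toExtension.Ring]
          (KaehlerDifferential.D k P.toExtension.Ring) 0) ∈ N₀
        rw [map_zero, TensorProduct.tmul_zero]
        exact zero_mem _
      · intro a c _ _ hha hhc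
        show ((1 : S) ⊗ₜ[P.toExtension.Ring]
          (KaehlerDifferential.D k P.toExtension.Ring) (a + c)) ∈ N₀
        rw [map_add, TensorProduct.tmul_add]
        exact add_mem hha hhc
      · intro a z hz hmem
        show ((1 : S) ⊗ₜ[P.toExtension.Ring]
          (KaehlerDifferential.D k P.toExtension.Ring) (a * z)) ∈ N₀
        have hsc : ∀ (c : P.toExtension.Ring) (m : Ω[P.toExtension.Ring⁄k]),
            ((1 : S) ⊗ₜ[P.toExtension.Ring] (c • m) : P.toExtension.CotangentSpace) =
              (algebraMap P.toExtension.Ring S c) • ((1 : S) ⊗ₜ[P.toExtension.Ring] m) :=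
          fun c m => S2.tmul_smul_aux c m
        rw [Derivation.leibniz, TensorProduct.tmul_add, hsc, hsc]
        refine add_mem (N₀.smul_mem _ hmem) ?_
        have hz0 : algebraMap P.toExtension.Ring S z = 0 := by
          have hzk : z ∈ P.ker := by rw [hker]; exact hz
          exact hzk
        rw [hz0, zero_smul]
        exact zero_mem _
    · rw [hN₀, Submodule.span_le]
      rintro _ ⟨r, rfl⟩
      refine ⟨Algebra.Extension.Cotangent.mk ⟨S2.g k v r, hgker r⟩, ?_⟩
      show _ = (1 : S) ⊗ₜ[P.toExtension.Ring]
        (KaehlerDifferential.D k P.toExtension.Ring) (S2.g k v r)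
      exact Algebra.Extension.cotangentComplex_mk _ _
  haveI : Finite (S2.Vars n s) := inferInstanceAs (Finite (S2.Vars n s))
  set e : ((S2.Vars n s) → S) ≃ₗ[S] P.toExtension.CotangentSpace := b.equivFun.symm with he
  have hbase : ∀ a : S2.Vars n s,
      (P.toExtension.toKaehler.comp e.toLinearMap) (Pi.single a 1) =
        KaehlerDifferential.D k S (gens a) := by
    intro a
    have h0 : b.equivFun (b a) = Pi.single a 1 := by
      ext j'
      rw [Module.Basis.equivFun_self, Pi.single_apply]
      simp [eq_comm]
    have h1 : e (Pi.single a 1) = b a := by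
      rw [he, ← h0]
      exact LinearEquiv.symm_apply_apply _ _
    rw [LinearMap.comp_apply, show e.toLinearMap (Pi.single a 1) = b a from h1,
      Algebra.Generators.cotangentSpaceBasis_apply]
    rw [show P.toExtension.toKaehler = KaehlerDifferential.mapBaseChange k P.toExtension.Ring S
      from rfl]
    erw [KaehlerDifferential.mapBaseChange_tmul]
    rw [one_smul]
    erw [KaehlerDifferential.map_D]
    rw [show algebraMap P.toExtension.Ring S (X a) = (aeval P.val) (X a) from rfl, aeval_X, hval]
  have hpd : ∀ (r : S2.Rel n s) (a : S2.Vars n s),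
      (aeval gens) (pderiv a (S2.g k v r)) = M a r := by
    rintro ⟨⟨i, j⟩, hsi, hij⟩ a
    dsimp only at hsi hij
    have hij' : i ≠ j := by
      intro h
      subst h
      exact absurd hij (lt_irrefl _)
    have hsj : s ≤ (j : ℕ) + 1 := by omega
    rw [S2.g, map_sub, pderiv_mul, pderiv_mul, pderiv_pow, pderiv_pow]
    simp only [S2.jJ, S2.iJ]
    cases a with
    | inl a' =>
      have d2 : pderiv (Sum.inl a' : S2.Vars n s)
          (X (Sum.inr (⟨j, hsj⟩ : {i : Fin n // s ≤ (i : ℕ) + 1})) :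
            MvPolynomial (S2.Vars n s) k) = 0 := pderiv_X_of_ne (by simp)
      have d4 : pderiv (Sum.inl a' : S2.Vars n s)
          (X (Sum.inr (⟨i, hsi⟩ : {i : Fin n // s ≤ (i : ℕ) + 1})) :
            MvPolynomial (S2.Vars n s) k) = 0 := pderiv_X_of_ne (by simp)
      rcases eq_or_ne a' i with rfl | hai
      · have d1 : pderiv (Sum.inl a' : S2.Vars n s)
            (X (Sum.inl a') : MvPolynomial (S2.Vars n s) k) = 1 := pderiv_X_self _
        have d3 : pderiv (Sum.inl a' : S2.Vars n s)
            (X (Sum.inl j) : MvPolynomial (S2.Vars n s) k) = 0 :=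
          pderiv_X_of_ne (by simp [hij'.symm])
        rw [d1, d2, d3, d4]
        simp only [mul_one, mul_zero, zero_mul, add_zero, zero_add, sub_zero, map_sub, map_add,
          map_mul, map_pow, map_natCast, aeval_X, hgens, Sum.elim_inl, Sum.elim_inr]
        rw [hM₁ ⟨(a', j), hsi, hij⟩]
      · rcases eq_or_ne a' j with rfl | haj
        · have d1 : pderiv (Sum.inl a' : S2.Vars n s)
              (X (Sum.inl i) : MvPolynomial (S2.Vars n s) k) = 0 :=
            pderiv_X_of_ne (by simp [hij'])
          have d3 : pderiv (Sum.inl a' : S2.Vars n s)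
              (X (Sum.inl a') : MvPolynomial (S2.Vars n s) k) = 1 := pderiv_X_self _
          rw [d1, d2, d3, d4]
          simp only [mul_one, mul_zero, zero_mul, add_zero, zero_add, zero_sub, map_neg, map_sub,
            map_add, map_mul, map_pow, map_natCast, aeval_X, hgens, Sum.elim_inl, Sum.elim_inr]
          rw [hM₂ ⟨(i, a'), hsi, hij⟩]
        · have d1 : pderiv (Sum.inl a' : S2.Vars n s)
              (X (Sum.inl i) : MvPolynomial (S2.Vars n s) k) = 0 :=
            pderiv_X_of_ne (by simp [Ne.symm hai])
          have d3 : pderiv (Sum.inl a' : S2.Vars n s)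
              (X (Sum.inl j) : MvPolynomial (S2.Vars n s) k) = 0 :=
            pderiv_X_of_ne (by simp [Ne.symm haj])
          rw [d1, d2, d3, d4]
          simp only [mul_one, mul_zero, zero_mul, add_zero, zero_add, sub_zero, sub_self, map_zero]
          rw [hM₅ ⟨(i, j), hsi, hij⟩ a' hai haj]
    | inr b =>
      have d1 : pderiv (Sum.inr b : S2.Vars n s)
          (X (Sum.inl i) : MvPolynomial (S2.Vars n s) k) = 0 := pderiv_X_of_ne (by simp)
      have d3 : pderiv (Sum.inr b : S2.Vars n s)
          (X (Sum.inl j) : MvPolynomial (S2.Vars n s) k) = 0 := pderiv_X_of_ne (by simp)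
      rcases eq_or_ne (b : Fin n) i with hbi | hbi
      · have hb : b = ⟨i, hsi⟩ := Subtype.ext hbi
        subst hb
        have d2 : pderiv (Sum.inr (⟨i, hsi⟩ : {i : Fin n // s ≤ (i : ℕ) + 1}) : S2.Vars n s)
            (X (Sum.inr (⟨j, hsj⟩ : {i : Fin n // s ≤ (i : ℕ) + 1})) :
              MvPolynomial (S2.Vars n s) k) = 0 :=
          pderiv_X_of_ne (by simp only [ne_eq, Sum.inr.injEq, Subtype.mk.injEq]; exact fun h => hij' h.symm)
        have d4 : pderiv (Sum.inr (⟨i, hsi⟩ : {i : Fin n // s ≤ (i : ℕ) + 1}) : S2.Vars n s)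
            (X (Sum.inr (⟨i, hsi⟩ : {i : Fin n // s ≤ (i : ℕ) + 1})) :
              MvPolynomial (S2.Vars n s) k) = 1 := pderiv_X_self _
        rw [d1, d2, d3, d4]
        simp only [mul_one, mul_zero, zero_mul, add_zero, zero_add, zero_sub, map_neg, map_sub,
          map_add, map_mul, map_pow, map_natCast, aeval_X, hgens, Sum.elim_inl, Sum.elim_inr]
        rw [hM₄ ⟨(i, j), hsi, hij⟩]
      · rcases eq_or_ne (b : Fin n) j with hbj | hbj
        · have hb : b = ⟨j, hsj⟩ := Subtype.ext hbj
          subst hb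
          have d2 : pderiv (Sum.inr (⟨j, hsj⟩ : {i : Fin n // s ≤ (i : ℕ) + 1}) : S2.Vars n s)
              (X (Sum.inr (⟨j, hsj⟩ : {i : Fin n // s ≤ (i : ℕ) + 1})) :
                MvPolynomial (S2.Vars n s) k) = 1 := pderiv_X_self _
          have d4 : pderiv (Sum.inr (⟨j, hsj⟩ : {i : Fin n // s ≤ (i : ℕ) + 1}) : S2.Vars n s)
              (X (Sum.inr (⟨i, hsi⟩ : {i : Fin n // s ≤ (i : ℕ) + 1})) :
                MvPolynomial (S2.Vars n s) k) = 0 :=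
            pderiv_X_of_ne (by simp only [ne_eq, Sum.inr.injEq, Subtype.mk.injEq]; exact fun h => hij' h)
          rw [d1, d2, d3, d4]
          simp only [mul_one, mul_zero, zero_mul, add_zero, zero_add, sub_zero, map_sub, map_add,
            map_mul, map_pow, map_natCast, aeval_X, hgens, Sum.elim_inl, Sum.elim_inr]
          rw [hM₃ ⟨(i, j), hsi, hij⟩]
        · have d2 : pderiv (Sum.inr b : S2.Vars n s)
              (X (Sum.inr (⟨j, hsj⟩ : {i : Fin n // s ≤ (i : ℕ) + 1})) :
                MvPolynomial (S2.Vars n s) k) = 0 :=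
            pderiv_X_of_ne (by simp only [ne_eq, Sum.inr.injEq, Subtype.ext_iff]; exact fun h => hbj h.symm)
          have d4 : pderiv (Sum.inr b : S2.Vars n s)
              (X (Sum.inr (⟨i, hsi⟩ : {i : Fin n // s ≤ (i : ℕ) + 1})) :
                MvPolynomial (S2.Vars n s) k) = 0 :=
            pderiv_X_of_ne (by simp only [ne_eq, Sum.inr.injEq, Subtype.ext_iff]; exact fun h => hbi h.symm)
          rw [d1, d2, d3, d4]
          simp only [mul_one, mul_zero, zero_mul, add_zero, zero_add, sub_self, map_zero]
          rw [hM₆ ⟨(i, j), hsi, hij⟩ b hbi hbj]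
  refine ⟨P.toExtension.toKaehler.comp e.toLinearMap, ?_, ?_, ?_, ?_⟩
  · intro i
    exact hbase (Sum.inl i)
  · intro j
    exact hbase (Sum.inr j)
  · exact (Algebra.Extension.toKaehler_surjective (P := P.toExtension)).comp e.surjective
  · rw [LinearMap.ker_comp, LinearMap.exact_iff.mp P.toExtension.exact_cotangentComplex_toKaehler,
      hrangeCC, hN₀, Submodule.comap_equiv_eq_map_symm, Submodule.map_span, ← Set.range_comp]
    have hfun : (⇑(e.symm.toLinearMap) ∘ w) = fun r => M.transpose r := by
      funext r a
      show (b.repr (w r)) a = M.transpose r a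
      rw [hw]
      rw [show (b.repr ((1 : S) ⊗ₜ[P.toExtension.Ring]
        (KaehlerDifferential.D k P.toExtension.Ring) (S2.g k v r))) a =
          (aeval P.val) (pderiv a (S2.g k v r)) from
        Algebra.Generators.cotangentSpaceBasis_repr_one_tmul P _ a]
      rw [hval, Matrix.transpose_apply]
      exact hpd r a
    rw [hfun]
    rw [show (Set.range fun r => M.transpose r) = Set.range M.col from rfl,
      ← Matrix.range_mulVecLin]
end

section
/- Let k be a field, A a k-algebra of finite presentation, and B = A[t_1,…,t_m] a polynomial ring in m variables over A. Then for every integer i, the Fitting ideal Fitt_{i+m}(Ω¹_{B/k}) equals the extension to B of the Fitting ideal Fitt_i(Ω¹_{A/k}). -/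
open Function Matrix TensorProduct

/-- The `i`-th Fitting ideal of an `A`-module `M` (for `i : ℤ`, with the convention that it is
the unit ideal for `i ≥ m` when `M` is generated by `m` elements, and zero for `i < 0`):
it is generated by all `(m - i)`-minors of relation matrices of arbitrary generating
families of `M`. -/
noncomputable def fittingIdeal (A : Type*) [CommRing A] (M : Type*) [AddCommGroup M]
    [Module A M] (i : ℤ) : Ideal A :=
  Ideal.span { d : A | ∃ (m : ℕ) (π : (Fin m → A) →ₗ[A] M), Function.Surjective π ∧
    ∃ (v : Fin ((m - i).toNat) → Fin m → A) (c : Fin ((m - i).toNat) → Fin m),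
      (∀ a, π (v a) = 0) ∧ d = (Matrix.of fun a b => v a (c b)).det }

section Det

variable {R : Type*} [CommRing R]

lemma det_eq_zero_of_smul_rows {t : ℕ} (N : Matrix (Fin t) (Fin t) R) (a1 a2 : Fin t)
    (h : a1 ≠ a2) (u : Fin t → R) (c1 c2 : R) (h1 : N a1 = c1 • u) (h2 : N a2 = c2 • u) :
    N.det = 0 := by
  have e1 : N = N.updateRow a1 (c1 • u) := by rw [← h1, Matrix.updateRow_eq_self]
  rw [e1, Matrix.det_updateRow_smul]
  set N1 := N.updateRow a1 u with hN1
  have hN1a2 : N1 a2 = c2 • u := by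
    rw [hN1, Matrix.updateRow_ne (Ne.symm h), h2]
  have e2 : N1 = N1.updateRow a2 (c2 • u) := by
    rw [← hN1a2, Matrix.updateRow_eq_self]
  rw [e2, Matrix.det_updateRow_smul]
  have : (N1.updateRow a2 u).det = 0 := by
    apply Matrix.det_zero_of_row_eq h
    rw [Matrix.updateRow_ne h, Matrix.updateRow_self, hN1, Matrix.updateRow_self]
  rw [this, mul_zero, mul_zero]

end Det

section FittAux

variable {R : Type*} [CommRing R] {M : Type*} [AddCommGroup M] [Module R M]

/-- The ideal generated by `s × s` minors of relations of a generating family `ρ`. -/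
def fittAuxN {ι : Type*} [Fintype ι] (ρ : (ι → R) →ₗ[R] M) (s : ℕ) : Ideal R :=
  Ideal.span { d : R | ∃ (v : Fin s → ι → R) (c : Fin s → ι),
    (∀ a, ρ (v a) = 0) ∧ d = (Matrix.of fun a b => v a (c b)).det }

lemma det_mem_fittAuxN {ι : Type*} [Fintype ι] (ρ : (ι → R) →ₗ[R] M) (s : ℕ)
    (v : Fin s → ι → R) (c : Fin s → ι) (hv : ∀ a, ρ (v a) = 0) :
    (Matrix.of fun a b => v a (c b)).det ∈ fittAuxN ρ s :=
  Ideal.subset_span ⟨v, c, hv, rfl⟩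

lemma fittAuxN_zero {ι : Type*} [Fintype ι] (ρ : (ι → R) →ₗ[R] M) :
    fittAuxN ρ 0 = ⊤ := by
  rw [Ideal.eq_top_iff_one]
  have h := det_mem_fittAuxN ρ 0 (fun a => a.elim0) (fun a => a.elim0) (fun a => a.elim0)
  simpa [Matrix.det_fin_zero] using h

lemma fittAuxN_succ_le {ι : Type*} [Fintype ι] (ρ : (ι → R) →ₗ[R] M) (s : ℕ) :
    fittAuxN ρ (s + 1) ≤ fittAuxN ρ s := by
  rw [fittAuxN, Ideal.span_le]
  rintro d ⟨v, c, hv, rfl⟩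
  rw [SetLike.mem_coe, Matrix.det_succ_row_zero]
  refine Ideal.sum_mem _ fun j _ => Ideal.mul_mem_left _ _ ?_
  exact det_mem_fittAuxN ρ s (fun a => v a.succ) (fun b => c (j.succAbove b))
    (fun a => hv a.succ)

lemma fittAuxN_antitone {ι : Type*} [Fintype ι] (ρ : (ι → R) →ₗ[R] M) {s s' : ℕ}
    (h : s' ≤ s) : fittAuxN ρ s ≤ fittAuxN ρ s' := by
  induction h with
  | refl => exact le_rfl
  | step h ih => exact le_trans (fittAuxN_succ_le ρ _) ih

lemma fittAuxN_reindex {ι κ : Type*} [Fintype ι] [Fintype κ] (e : κ ≃ ι)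
    (ρ : (ι → R) →ₗ[R] M) (s : ℕ) :
    fittAuxN (ρ ∘ₗ LinearMap.funLeft R R e.symm) s = fittAuxN ρ s := by
  apply le_antisymm <;> rw [fittAuxN, Ideal.span_le] <;> rintro d ⟨v, c, hv, rfl⟩ <;>
    rw [SetLike.mem_coe]
  · have h := det_mem_fittAuxN ρ s (fun a => v a ∘ e.symm) (fun b => e (c b)) ?_
    · convert h using 2 with a b
      simp
    · intro a
      simpa [LinearMap.funLeft] using hv a
  · have h := det_mem_fittAuxN (ρ ∘ₗ LinearMap.funLeft R R e.symm) s
      (fun a => v a ∘ e) (fun b => e.symm (c b)) ?_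
    · convert h using 2 with a b
      simp
    · intro a
      have : (v a ∘ e) ∘ e.symm = v a := by
        funext t; simp
      simpa [LinearMap.funLeft, this] using hv a



/-- Generalized Laplace-type statement: a determinant of a matrix having at least `s` rows
which are relations of `ρ` supported on the left block lies in the ideal of `s`-minors. -/
lemma det_mem_of_rows {ι κ : Type*} [Fintype ι] [Fintype κ] (π : (ι → R) →ₗ[R] M) (s : ℕ) :
    ∀ (n : ℕ) (r : Fin n → (ι ⊕ κ) → R) (c : Fin n → ι ⊕ κ) (E : Finset (Fin n)),
      s ≤ E.card → (∀ a ∈ E, ∃ z, π z = 0 ∧ r a = Sum.elim z 0) →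
      (Matrix.of fun a b => r a (c b)).det ∈ fittAuxN π s := by
  intro n
  induction n with
  | zero =>
    intro r c E hE _
    have hE0 : E.card = 0 := Nat.le_zero.mp (le_trans (Finset.card_le_univ E) (by simp))
    have hs : s = 0 := Nat.le_zero.mp (hE0 ▸ hE)
    rw [hs, fittAuxN_zero]
    trivial
  | succ n ih =>
    intro r c E hE hrows
    by_cases hall : ∀ a, ∃ z, π z = 0 ∧ r a = Sum.elim z 0
    · choose z hz hrz using hall
      by_cases hcol : ∃ b j, c b = Sum.inr j
      · obtain ⟨b, j, hb⟩ := hcol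
        have h0 : (Matrix.of fun a b => r a (c b)).det = 0 := by
          apply Matrix.det_eq_zero_of_column_eq_zero b
          intro a
          simp [hb, hrz a]
        rw [h0]; exact Ideal.zero_mem _
      · push_neg at hcol
        have hc : ∀ b, ∃ i0, c b = Sum.inl i0 := by
          intro b
          cases hcb : c b with
          | inl i0 => exact ⟨i0, rfl⟩
          | inr j => exact absurd hcb (hcol b j)
        choose c0 hc0 using hc
        have heq : (Matrix.of fun a b => r a (c b)) = Matrix.of fun a b => z a (c0 b) := by
          ext a b
          rw [Matrix.of_apply, Matrix.of_apply, hc0, hrz]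
          rfl
        rw [heq]
        refine fittAuxN_antitone π ?_ (det_mem_fittAuxN π (n + 1) z c0 hz)
        calc s ≤ E.card := hE
          _ ≤ n + 1 := by simpa using Finset.card_le_univ E
    · push_neg at hall
      obtain ⟨a0, ha0⟩ := hall
      have ha0E : a0 ∉ E := by
        intro h
        obtain ⟨z, hz1, hz2⟩ := hrows a0 h
        exact ha0 z hz1 hz2
      rw [Matrix.det_succ_row _ a0]
      refine Ideal.sum_mem _ fun j _ => Ideal.mul_mem_left _ _ ?_
      classical
      set E' : Finset (Fin n) := Finset.univ.filter (fun a => a0.succAbove a ∈ E) with hE'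
      have himg : E'.image a0.succAbove = E := by
        ext e
        simp only [Finset.mem_image, hE', Finset.mem_filter, Finset.mem_univ, true_and]
        constructor
        · rintro ⟨a, ha, rfl⟩; exact ha
        · intro he
          obtain ⟨a, ha⟩ := Fin.exists_succAbove_eq (show e ≠ a0 from fun hh => ha0E (hh ▸ he))
          exact ⟨a, ha.symm ▸ he, ha⟩
      have hcard : E'.card = E.card := by
        rw [← himg, Finset.card_image_of_injective _ (Fin.succAbove_right_injective)]
      have hsub : (Matrix.of fun a b => r a (c b)).submatrix a0.succAbove j.succAbove
          = Matrix.of fun a b => (r (a0.succAbove a)) ((c ∘ j.succAbove) b) := rfl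
      rw [hsub]
      refine ih (fun a => r (a0.succAbove a)) (c ∘ j.succAbove) E' (hcard ▸ hE) ?_
      intro a ha
      rw [hE', Finset.mem_filter] at ha
      exact hrows _ ha.2


/-- Adding redundant generators: the minors ideal is unchanged (with shifted size). -/
lemma fittAuxN_combine {q p : ℕ} (π : (Fin q → R) →ₗ[R] M) (hπ : Surjective π)
    (ρ0 : (Fin p → R) →ₗ[R] M) (s : ℕ) :
    fittAuxN (π ∘ₗ LinearMap.funLeft R R Sum.inl + ρ0 ∘ₗ LinearMap.funLeft R R Sum.inr)
      (s + p) = fittAuxN π s := by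
  classical
  set σ := π ∘ₗ LinearMap.funLeft R R Sum.inl + ρ0 ∘ₗ LinearMap.funLeft R R Sum.inr with hσ
  have hσap : ∀ u : Fin q ⊕ Fin p → R, σ u = π (u ∘ Sum.inl) + ρ0 (u ∘ Sum.inr) := by
    intro u; rfl
  obtain ⟨W, hW⟩ : ∃ W : Fin p → Fin q → R, ∀ j, π (W j) = ρ0 (Pi.single j 1) := by
    choose W hW using fun j => hπ (ρ0 (Pi.single j 1))
    exact ⟨W, hW⟩
  apply le_antisymm
  · -- hard direction: σ-minors of size s+p lie in the ideal of s-minors of π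
    rw [fittAuxN, Ideal.span_le]
    rintro d ⟨v, c, hv, rfl⟩
    rw [SetLike.mem_coe]
    set y : Fin (s + p) → Fin p → R := fun a j => v a (Sum.inr j) with hy
    set z : Fin (s + p) → Fin q → R :=
      fun a => (fun l => v a (Sum.inl l)) + ∑ j, y a j • W j with hzdef
    have hz : ∀ a, π (z a) = 0 := by
      intro a
      have h1 : π (z a) = π (v a ∘ Sum.inl) + ∑ j, y a j • π (W j) := by
        simp [hzdef, Finset.sum_apply, map_sum]
        rfl
      have hySum : ∑ j, y a j • (Pi.single j (1 : R) : Fin p → R) = y a := by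
        funext j'
        rw [Finset.sum_apply]
        simp [Pi.single_apply]
      have h2 : ∑ j, y a j • π (W j) = ρ0 (y a) := by
        simp_rw [hW]
        conv_rhs => rw [← hySum]
        rw [map_sum]
        simp_rw [LinearMap.map_smul]
      rw [h1, h2]
      show π (v a ∘ Sum.inl) + ρ0 (v a ∘ Sum.inr) = 0
      rw [← hσap, hv]
    set g : Fin p → Fin q ⊕ Fin p → R :=
      fun j => Sum.elim (-(W j)) (Pi.single j (1 : R)) with hg
    set w : Fin (s + p) → Option (Fin p) → (Fin q ⊕ Fin p) → R :=
      fun a o => o.elim (Sum.elim (z a) 0) (fun j => y a j • g j) with hw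
    have hrow : ∀ a, (fun b => v a (c b)) = ∑ o : Option (Fin p), (fun b => w a o (c b)) := by
      intro a
      funext b
      rw [Finset.sum_apply]
      rw [Fintype.sum_option]
      cases hcb : c b with
      | inl l =>
        simp only [hw, hg, Option.elim, Sum.elim_inl, Pi.smul_apply, smul_eq_mul, hzdef,
          Pi.add_apply, Finset.sum_apply, mul_neg, hcb, Pi.neg_apply, Finset.sum_neg_distrib]
        ring
      | inr j' =>
        simp only [hw, hg, Option.elim, Sum.elim_inr, Pi.smul_apply, smul_eq_mul, hcb,
          Pi.zero_apply, zero_add, Pi.single_apply, mul_ite, mul_one, mul_zero]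
        rw [Finset.sum_ite_eq Finset.univ j' (fun j => y a j)]
        simp [hy]
    have hsum : (Matrix.of fun a b => v a (c b)).det
        = ∑ f : Fin (s + p) → Option (Fin p), (Matrix.of fun a b => w a (f a) (c b)).det := by
      have hlhs : (Matrix.of fun a b => v a (c b))
          = Matrix.of (fun a => ∑ o : Option (Fin p), fun b => w a o (c b)) := by
        ext a b
        exact congrFun (hrow a) b
      rw [hlhs]
      exact (Matrix.detRowAlternating (R := R) (n := Fin (s + p))).toMultilinearMap.map_sum
        (g := fun a (o : Option (Fin p)) => fun b => w a o (c b))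
    rw [hsum]
    refine Ideal.sum_mem _ fun f _ => ?_
    set E : Finset (Fin (s + p)) := Finset.univ.filter (fun a => f a = none) with hE
    by_cases hEs : s ≤ E.card
    · refine det_mem_of_rows π s (s + p) (fun a => w a (f a)) c E hEs ?_
      intro a ha
      rw [hE, Finset.mem_filter] at ha
      refine ⟨z a, hz a, ?_⟩
      show w a (f a) = _
      rw [ha.2]
      rfl
    · push_neg at hEs
      set F : Finset (Fin (s + p)) := Finset.univ.filter (fun a => ¬ (f a = none)) with hF
      have hcards : E.card + F.card = s + p := by
        rw [hE, hF, Finset.card_filter_add_card_filter_not]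
        simp
      have hFp : p < F.card := by omega
      have hsome : ∀ a ∈ F, ∃ j, f a = some j := by
        intro a ha
        rw [hF, Finset.mem_filter] at ha
        exact Option.ne_none_iff_exists'.mp ha.2
      choose jf hjf using hsome
      obtain ⟨a0, ha0⟩ := Finset.card_pos.mp (lt_of_le_of_lt (Nat.zero_le p) hFp)
      set f' : Fin (s + p) → Fin p := fun a => (f a).getD (jf a0 ha0) with hf'
      obtain ⟨a1, ha1, a2, ha2, hne, heq⟩ :=
        Finset.exists_ne_map_eq_of_card_lt_of_maps_to (f := f')
          (by simpa using hFp) (fun a _ => Finset.mem_univ (f' a))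
      have hfa1 : f a1 = some (f' a1) := by
        simp only [hf', hjf a1 ha1, Option.getD_some]
      have hfa2 : f a2 = some (f' a2) := by
        simp only [hf', hjf a2 ha2, Option.getD_some]
      have hdz : (Matrix.of fun a b => w a (f a) (c b)).det = 0 := by
        apply det_eq_zero_of_smul_rows _ a1 a2 hne (fun b => g (f' a1) (c b))
          (y a1 (f' a1)) (y a2 (f' a2))
        · funext b
          show w a1 (f a1) (c b) = _
          rw [hfa1]
          simp [hw]
        · funext b
          show w a2 (f a2) (c b) = _
          rw [hfa2, heq]
          simp [hw]
      rw [hdz]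
      exact Ideal.zero_mem _
  · -- easy direction : π-minors embed as (s+p)-minors of σ
    rw [fittAuxN, Ideal.span_le]
    rintro d ⟨v, c, hv, rfl⟩
    rw [SetLike.mem_coe]
    set v0 : Fin s ⊕ Fin p → (Fin q ⊕ Fin p) → R :=
      Sum.elim (fun a => Sum.elim (v a) 0) (fun j => Sum.elim (-(W j)) (Pi.single j 1)) with hv0
    set c0 : Fin s ⊕ Fin p → Fin q ⊕ Fin p := Sum.elim (Sum.inl ∘ c) Sum.inr with hc0
    have hrel : ∀ a, σ (v0 a) = 0 := by
      rintro (a | j) <;> rw [hσap]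
      · show π (v a) + ρ0 0 = 0
        rw [hv a, map_zero, add_zero]
      · show π (-(W j)) + ρ0 (Pi.single j 1) = 0
        rw [map_neg, hW, neg_add_cancel]
    have hmem := det_mem_fittAuxN σ (s + p)
      (fun a => v0 (finSumFinEquiv.symm a)) (fun b => c0 (finSumFinEquiv.symm b))
      (fun a => hrel _)
    have hdet : (Matrix.of fun a b => v0 (finSumFinEquiv.symm a) (c0 (finSumFinEquiv.symm b))).det
        = (Matrix.of fun a b => v0 a (c0 b)).det := by
      rw [show (Matrix.of fun a b => v0 (finSumFinEquiv.symm a) (c0 (finSumFinEquiv.symm b)))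
        = (Matrix.of fun a b => v0 a (c0 b)).submatrix finSumFinEquiv.symm finSumFinEquiv.symm
        from rfl]
      exact Matrix.det_submatrix_equiv_self _ _
    have hblock : (Matrix.of fun a b => v0 a (c0 b)) =
        Matrix.fromBlocks (Matrix.of fun a b => v a (c b)) 0
          (Matrix.of fun j b => -(W j (c b))) 1 := by
      ext (a | j) (b | j') <;>
        simp [hv0, hc0, Matrix.fromBlocks, Matrix.one_apply, Pi.single_apply, eq_comm]
    rw [hdet, hblock, Matrix.det_fromBlocks_zero₁₂, Matrix.det_one, mul_one] at hmem
    exact hmem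


/-- Invariance: the Fitting ideal can be computed from any single presentation. -/
theorem fittingIdeal_eq_fittAuxN {n : ℕ} (ρ : (Fin n → R) →ₗ[R] M) (hρ : Surjective ρ)
    (i : ℤ) : fittingIdeal R M i = fittAuxN ρ ((n - i).toNat) := by
  apply le_antisymm
  · rw [fittingIdeal, Ideal.span_le]
    rintro d ⟨q, π, hπ, v, c, hv, rfl⟩
    rw [SetLike.mem_coe]
    by_cases hb : ((n : ℤ) - i).toNat = 0
    · rw [hb, fittAuxN_zero]; trivial
    · have hd : (Matrix.of fun a b => v a (c b)).det ∈ fittAuxN π (((q : ℤ) - i).toNat) :=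
        det_mem_fittAuxN π _ v c hv
      rw [← fittAuxN_combine π hπ ρ (((q : ℤ) - i).toNat)] at hd
      rw [← fittAuxN_reindex (Equiv.sumComm (Fin n) (Fin q))
        (π ∘ₗ LinearMap.funLeft R R Sum.inl + ρ ∘ₗ LinearMap.funLeft R R Sum.inr)] at hd
      have hcomm : (π ∘ₗ LinearMap.funLeft R R Sum.inl + ρ ∘ₗ LinearMap.funLeft R R Sum.inr)
          ∘ₗ LinearMap.funLeft R R (Equiv.sumComm (Fin n) (Fin q)).symm
          = (ρ ∘ₗ LinearMap.funLeft R R Sum.inl + π ∘ₗ LinearMap.funLeft R R Sum.inr) := by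
        apply LinearMap.ext
        intro u
        show π ((u ∘ (Equiv.sumComm (Fin n) (Fin q)).symm) ∘ Sum.inl)
            + ρ ((u ∘ (Equiv.sumComm (Fin n) (Fin q)).symm) ∘ Sum.inr)
          = ρ (u ∘ Sum.inl) + π (u ∘ Sum.inr)
        rw [add_comm]
        rfl
      rw [hcomm] at hd
      have hle : ((n : ℤ) - i).toNat + q ≤ ((q : ℤ) - i).toNat + n := by omega
      have hd2 := fittAuxN_antitone _ hle hd
      rwa [fittAuxN_combine ρ hρ π (((n : ℤ) - i).toNat)] at hd2
  · rw [fittAuxN, Ideal.span_le]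
    rintro d ⟨v, c, hv, rfl⟩
    exact Ideal.subset_span ⟨n, ρ, hρ, v, c, hv, rfl⟩

theorem fittingIdeal_eq_fittAuxN' {ι : Type*} [Fintype ι] (ρ : (ι → R) →ₗ[R] M)
    (hρ : Surjective ρ) (i : ℤ) :
    fittingIdeal R M i = fittAuxN ρ ((Fintype.card ι - i).toNat) := by
  set e : Fin (Fintype.card ι) ≃ ι := (Fintype.equivFin ι).symm with he
  have hsurj : Surjective (ρ ∘ₗ LinearMap.funLeft R R e.symm) := by
    intro x
    obtain ⟨u, hu⟩ := hρ x
    refine ⟨u ∘ e, ?_⟩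
    show ρ ((u ∘ e) ∘ e.symm) = x
    have : (u ∘ e) ∘ e.symm = u := by funext t; simp
    rw [this, hu]
  rw [fittingIdeal_eq_fittAuxN _ hsurj i, fittAuxN_reindex e ρ]


variable {N : Type*} [AddCommGroup N] [Module R N]

lemma fittingIdeal_le_of_equiv (e : M ≃ₗ[R] N) (i : ℤ) :
    fittingIdeal R M i ≤ fittingIdeal R N i := by
  rw [fittingIdeal, Ideal.span_le]
  rintro d ⟨q, π, hπ, v, c, hv, rfl⟩
  refine Ideal.subset_span ⟨q, e.toLinearMap ∘ₗ π, e.surjective.comp hπ, v, c, ?_, rfl⟩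
  intro a
  show e (π (v a)) = 0
  rw [hv a, map_zero]

lemma fittingIdeal_congr (e : M ≃ₗ[R] N) (i : ℤ) :
    fittingIdeal R M i = fittingIdeal R N i :=
  le_antisymm (fittingIdeal_le_of_equiv e i) (fittingIdeal_le_of_equiv e.symm i)

/-- Adding a free direct summand of rank `m` shifts the Fitting index by `m`. -/
lemma fittingIdeal_prod_pi [Module.Finite R M] (m : ℕ) (i : ℤ) :
    fittingIdeal R (M × (Fin m → R)) (i + m) = fittingIdeal R M i := by
  classical
  obtain ⟨n, π, hπ⟩ := Module.Finite.exists_fin' R M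
  set τ : ((Fin n ⊕ Fin m) → R) →ₗ[R] M × (Fin m → R) :=
    LinearMap.prod (π ∘ₗ LinearMap.funLeft R R Sum.inl) (LinearMap.funLeft R R Sum.inr)
    with hτ
  have hτs : Surjective τ := by
    rintro ⟨x, yy⟩
    obtain ⟨u, hu⟩ := hπ x
    refine ⟨Sum.elim u yy, ?_⟩
    show (π (Sum.elim u yy ∘ Sum.inl), Sum.elim u yy ∘ Sum.inr) = (x, yy)
    rw [show Sum.elim u yy ∘ Sum.inl = u from rfl, show Sum.elim u yy ∘ Sum.inr = yy from rfl,
      hu]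
  rw [fittingIdeal_eq_fittAuxN' τ hτs (i + m), fittingIdeal_eq_fittAuxN π hπ i]
  have hcard : ((Fintype.card (Fin n ⊕ Fin m) : ℤ) - (i + m)).toNat = ((n : ℤ) - i).toNat := by
    simp only [Fintype.card_sum, Fintype.card_fin]
    omega
  rw [hcard]
  set b := ((n : ℤ) - i).toNat
  apply le_antisymm
  · rw [fittAuxN, Ideal.span_le]
    rintro d ⟨v, c, hv, rfl⟩
    rw [SetLike.mem_coe]
    by_cases hcol : ∃ b0 j, c b0 = Sum.inr j
    · obtain ⟨b0, j, hb0⟩ := hcol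
      have h0 : (Matrix.of fun a b => v a (c b)).det = 0 := by
        apply Matrix.det_eq_zero_of_column_eq_zero b0
        intro a
        have := congrArg Prod.snd (hv a)
        have h2 : v a ∘ Sum.inr = 0 := this
        rw [Matrix.of_apply, hb0]
        exact congrFun h2 j
      rw [h0]; exact Ideal.zero_mem _
    · push_neg at hcol
      have hc : ∀ b0, ∃ l, c b0 = Sum.inl l := by
        intro b0
        cases hcb : c b0 with
        | inl l => exact ⟨l, rfl⟩
        | inr j => exact absurd hcb (hcol b0 j)
      choose c0 hc0 using hc
      have heq : (Matrix.of fun a b => v a (c b))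
          = Matrix.of fun a b => (v a ∘ Sum.inl) (c0 b) := by
        ext a b0
        rw [Matrix.of_apply, Matrix.of_apply, hc0]
        rfl
      rw [heq]
      refine det_mem_fittAuxN π b _ c0 ?_
      intro a
      exact congrArg Prod.fst (hv a)
  · rw [fittAuxN, Ideal.span_le]
    rintro d ⟨v, c, hv, rfl⟩
    rw [SetLike.mem_coe]
    have h := det_mem_fittAuxN τ b (fun a => Sum.elim (v a) (0 : Fin m → R))
      (fun b0 => Sum.inl (c b0)) ?_
    · convert h using 2
      rfl
    · intro a
      show (π (Sum.elim (v a) (0 : Fin m → R) ∘ Sum.inl),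
        Sum.elim (v a) (0 : Fin m → R) ∘ Sum.inr) = 0
      rw [show Sum.elim (v a) (0 : Fin m → R) ∘ Sum.inl = v a from rfl, hv a]
      rfl


end FittAux

section BaseChange

variable {R : Type*} [CommRing R] {M : Type*} [AddCommGroup M] [Module R M]
variable (S : Type*) [CommRing S] [Algebra R S]

/-- The base change of a presentation map, as a map on finite free modules. -/
noncomputable def bcMap {n : ℕ} (π : (Fin n → R) →ₗ[R] M) : (Fin n → S) →ₗ[S] S ⊗[R] M :=
  (π.baseChange S) ∘ₗ (TensorProduct.piScalarRight R S S (Fin n)).symm.toLinearMap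

lemma bcMap_tmul {n : ℕ} (π : (Fin n → R) →ₗ[R] M) (s : S) (x : Fin n → R) :
    bcMap S π (fun j => x j • s) = s ⊗ₜ[R] π x := by
  have h1 : (TensorProduct.piScalarRight R S S (Fin n)).symm (fun j => x j • s)
      = s ⊗ₜ[R] x := by
    rw [LinearEquiv.symm_apply_eq]
    rw [TensorProduct.piScalarRight_apply, TensorProduct.piScalarRightHom_tmul]
  show (π.baseChange S) ((TensorProduct.piScalarRight R S S (Fin n)).symm (fun j => x j • s))
    = s ⊗ₜ[R] π x
  rw [h1, LinearMap.baseChange_tmul]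

lemma bcMap_alg {n : ℕ} (π : (Fin n → R) →ₗ[R] M) (x : Fin n → R) :
    bcMap S π (fun j => algebraMap R S (x j)) = (1 : S) ⊗ₜ[R] π x := by
  have : (fun j => algebraMap R S (x j)) = fun j => x j • (1 : S) := by
    funext j
    rw [Algebra.smul_def, mul_one]
  rw [this, bcMap_tmul]

lemma bcMap_surjective {n : ℕ} (π : (Fin n → R) →ₗ[R] M) (hπ : Surjective π) :
    Surjective (bcMap S π) := by
  have h1 : Surjective (π.baseChange S) := by
    rw [LinearMap.baseChange_eq_ltensor]
    exact LinearMap.lTensor_surjective S hπ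
  intro t
  obtain ⟨y, hy⟩ := h1 t
  refine ⟨TensorProduct.piScalarRight R S S (Fin n) y, ?_⟩
  show (π.baseChange S) ((TensorProduct.piScalarRight R S S (Fin n)).symm
    (TensorProduct.piScalarRight R S S (Fin n) y)) = t
  rw [LinearEquiv.symm_apply_apply]
  exact hy

lemma bcMap_ker {n : ℕ} (π : (Fin n → R) →ₗ[R] M) (hπ : Surjective π) (u : Fin n → S)
    (hu : bcMap S π u = 0) :
    ∃ T : Finset (S × (LinearMap.ker π)),
      u = ∑ t ∈ T, fun j => ((t.2 : Fin n → R) j) • t.1 := by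
  classical
  have hex : Function.Exact (LinearMap.lTensor S (LinearMap.ker π).subtype)
      (LinearMap.lTensor S π) :=
    lTensor_exact S (LinearMap.exact_subtype_ker_map π) hπ
  set t0 := (TensorProduct.piScalarRight R S S (Fin n)).symm u with ht0
  have ht0ker : LinearMap.lTensor S π t0 = 0 := by
    rw [← LinearMap.baseChange_eq_ltensor]
    exact hu
  obtain ⟨t1, ht1⟩ := (hex t0).mp ht0ker
  obtain ⟨T, hT⟩ := TensorProduct.exists_finset t1
  refine ⟨T, ?_⟩
  have : u = TensorProduct.piScalarRight R S S (Fin n) t0 := by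
    rw [ht0, LinearEquiv.apply_symm_apply]
  rw [this, ← ht1, hT, map_sum, map_sum]
  refine Finset.sum_congr rfl fun t _ => ?_
  rw [LinearMap.lTensor_tmul, TensorProduct.piScalarRight_apply,
    TensorProduct.piScalarRightHom_tmul]
  rfl

variable [Module.Finite R M]

theorem fittingIdeal_baseChange (i : ℤ) :
    fittingIdeal S (S ⊗[R] M) i = Ideal.map (algebraMap R S) (fittingIdeal R M i) := by
  classical
  obtain ⟨n, π, hπ⟩ := Module.Finite.exists_fin' R M
  apply le_antisymm
  · rw [fittingIdeal_eq_fittAuxN (bcMap S π) (bcMap_surjective S π hπ) i,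
      fittAuxN, Ideal.span_le]
    rintro d ⟨v, c, hv, rfl⟩
    rw [SetLike.mem_coe]
    choose T hT using fun a => bcMap_ker S π hπ (v a) (hv a)
    have hsum : (Matrix.of fun a b => v a (c b)).det
        = ∑ r ∈ Fintype.piFinset T,
            (Matrix.of fun a b => ((r a).2 : Fin n → R) (c b) • (r a).1).det := by
      have hlhs : (Matrix.of fun a b => v a (c b))
          = Matrix.of (fun a => ∑ t ∈ T a, fun b => ((t.2 : Fin n → R) (c b)) • t.1) := by
        ext a b
        rw [Matrix.of_apply, hT a]
        rw [Finset.sum_apply, Matrix.of_apply, Finset.sum_apply]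
      rw [hlhs]
      exact (Matrix.detRowAlternating (R := S) (n := Fin _)).toMultilinearMap.map_sum_finset
        (g := fun a (t : S × (LinearMap.ker π)) => fun b => ((t.2 : Fin n → R) (c b)) • t.1) T
    rw [hsum]
    refine Ideal.sum_mem _ fun r _ => ?_
    have hfac : (Matrix.of fun a b => ((r a).2 : Fin n → R) (c b) • (r a).1).det
        = (∏ a, (r a).1) * algebraMap R S
            (Matrix.of fun a b => ((r a).2 : Fin n → R) (c b)).det := by
      have h1 : (Matrix.of fun a b => ((r a).2 : Fin n → R) (c b) • (r a).1)
          = Matrix.of fun a b => (r a).1 *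
              (algebraMap R S) (((r a).2 : Fin n → R) (c b)) := by
        ext a b
        rw [Matrix.of_apply, Matrix.of_apply, Algebra.smul_def, mul_comm]
      have hm := Matrix.det_mul_column (fun a => (r a).1)
        (Matrix.of fun a b => (algebraMap R S) (((r a).2 : Fin n → R) (c b)))
      simp only [Matrix.of_apply] at hm
      rw [h1, hm]
      congr 1
      rw [RingHom.map_det]
      rfl
    rw [hfac]
    refine Ideal.mul_mem_left _ _ (Ideal.mem_map_of_mem _ ?_)
    rw [fittingIdeal_eq_fittAuxN π hπ i]
    exact det_mem_fittAuxN π _ (fun a => ((r a).2 : Fin n → R)) c (fun a => (r a).2.2)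
  · rw [Ideal.map_le_iff_le_comap, fittingIdeal, Ideal.span_le]
    rintro d ⟨q, π₂, hπ₂, v, c, hv, rfl⟩
    rw [SetLike.mem_coe, Ideal.mem_comap]
    refine Ideal.subset_span ⟨q, bcMap S π₂, bcMap_surjective S π₂ hπ₂,
      (fun a j => algebraMap R S (v a j)), c, ?_, ?_⟩
    · intro a
      rw [bcMap_alg S π₂ (v a), hv a, TensorProduct.tmul_zero]
    · rw [RingHom.map_det]
      rfl

end BaseChange

section Kaehler

variable (k A : Type*) [CommRing k] [CommRing A] [Algebra k A] (m : ℕ)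

local notation "B" => MvPolynomial (Fin m) A

/-- The "constant part" derivative `B → B ⊗[A] Ω[A⁄k]`, as a `k`-linear map. -/
noncomputable def D1lin : B →ₗ[k] (B ⊗[A] (Ω[A⁄k])) :=
  (Finsupp.lsum k fun s : (Fin m →₀ ℕ) =>
      ((TensorProduct.mk A B (Ω[A⁄k]) (MvPolynomial.monomial s 1)).restrictScalars k) ∘ₗ
        (KaehlerDifferential.D k A).toLinearMap) ∘ₗ
    ((MvPolynomial.basisMonomials (Fin m) A).repr.restrictScalars k).toLinearMap

lemma D1lin_monomial (s : Fin m →₀ ℕ) (a : A) :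
    D1lin k A m (MvPolynomial.monomial s a)
      = MvPolynomial.monomial s 1 ⊗ₜ[A] (KaehlerDifferential.D k A a) := by
  have hrepr : (MvPolynomial.basisMonomials (Fin m) A).repr (MvPolynomial.monomial s a)
      = Finsupp.single s a := rfl
  show (Finsupp.lsum k fun s : (Fin m →₀ ℕ) =>
      ((TensorProduct.mk A B (Ω[A⁄k]) (MvPolynomial.monomial s 1)).restrictScalars k) ∘ₗ
        (KaehlerDifferential.D k A).toLinearMap)
      ((MvPolynomial.basisMonomials (Fin m) A).repr (MvPolynomial.monomial s a)) = _
  rw [hrepr, Finsupp.lsum_single]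
  rfl

end Kaehler

section K2
variable (k A : Type*) [CommRing k] [CommRing A] [Algebra k A] (m : ℕ)

local notation "B" => MvPolynomial (Fin m) A

/-- The vector of partial derivatives, as a `k`-linear map. -/
noncomputable def D2lin : B →ₗ[k] (Fin m → B) :=
  LinearMap.pi fun j => ((MvPolynomial.pderiv j).toLinearMap.restrictScalars k)

lemma D2lin_apply (p : B) (j : Fin m) : D2lin k A m p j = MvPolynomial.pderiv j p := rfl

lemma D1lin_leibniz (p q : B) :
    D1lin k A m (p * q) = p • D1lin k A m q + q • D1lin k A m p := by
  induction p using MvPolynomial.induction_on' with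
  | add p1 p2 h1 h2 =>
    rw [add_mul, map_add, h1, h2, map_add, add_smul, smul_add]
    abel
  | monomial s a =>
    induction q using MvPolynomial.induction_on' with
    | add q1 q2 g1 g2 =>
      rw [mul_add, map_add, g1, g2, map_add, add_smul, smul_add]
      abel
    | monomial t b =>
      rw [MvPolynomial.monomial_mul, D1lin_monomial, D1lin_monomial, D1lin_monomial,
        Derivation.leibniz]
      rw [TensorProduct.tmul_add]
      congr 1
      · rw [TensorProduct.smul_tmul', ← TensorProduct.smul_tmul, smul_eq_mul,
          MvPolynomial.monomial_mul, mul_one, MvPolynomial.smul_monomial, smul_eq_mul, mul_one]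
      · rw [TensorProduct.smul_tmul', ← TensorProduct.smul_tmul, smul_eq_mul,
          MvPolynomial.monomial_mul, mul_one, MvPolynomial.smul_monomial, smul_eq_mul, mul_one,
          add_comm s t]
end K2

section K3
variable (k A : Type*) [CommRing k] [CommRing A] [Algebra k A] (m : ℕ)

local notation "B" => MvPolynomial (Fin m) A

lemma D1lin_C (a : A) : D1lin k A m (MvPolynomial.C a)
    = (1 : B) ⊗ₜ[A] (KaehlerDifferential.D k A a) := by
  rw [show (MvPolynomial.C a : B) = MvPolynomial.monomial 0 a from rfl, D1lin_monomial,
    MvPolynomial.monomial_zero', MvPolynomial.C_1]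

lemma D1lin_one : D1lin k A m 1 = 0 := by
  rw [← MvPolynomial.C_1, D1lin_C, Derivation.map_one_eq_zero, TensorProduct.tmul_zero]

lemma D1lin_X (j : Fin m) : D1lin k A m (MvPolynomial.X j) = 0 := by
  rw [show (MvPolynomial.X j : B) = MvPolynomial.monomial (Finsupp.single j 1) 1 from rfl,
    D1lin_monomial, Derivation.map_one_eq_zero, TensorProduct.tmul_zero]

/-- The combined derivation `B → (B ⊗[A] Ω[A⁄k]) × B^m`. -/
noncomputable def D12 : Derivation k B ((B ⊗[A] (Ω[A⁄k])) × (Fin m → B)) where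
  toLinearMap := (D1lin k A m).prod (D2lin k A m)
  map_one_eq_zero' := by
    show ((D1lin k A m).prod (D2lin k A m)) 1 = 0
    rw [LinearMap.prod_apply]
    have h2 : D2lin k A m 1 = 0 := by
      funext j
      rw [D2lin_apply]
      simp
    rw [Function.prod, D1lin_one, h2]
    rfl
  leibniz' p q := by
    show ((D1lin k A m).prod (D2lin k A m)) (p * q)
      = p • ((D1lin k A m).prod (D2lin k A m)) q + q • ((D1lin k A m).prod (D2lin k A m)) p
    rw [LinearMap.prod_apply, LinearMap.prod_apply, LinearMap.prod_apply, Function.prod, Function.prod,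
      Function.prod, Prod.smul_mk, Prod.smul_mk, Prod.mk_add_mk, Prod.mk.injEq]
    constructor
    · exact D1lin_leibniz k A m p q
    · funext j
      rw [D2lin_apply, MvPolynomial.pderiv_mul, Pi.add_apply, Pi.smul_apply, Pi.smul_apply,
        D2lin_apply, D2lin_apply, smul_eq_mul, smul_eq_mul]
      ring

/-- The canonical map `Ω[B⁄k] → (B ⊗[A] Ω[A⁄k]) × B^m`. -/
noncomputable def deltaMap : (Ω[B⁄k]) →ₗ[B] ((B ⊗[A] (Ω[A⁄k])) × (Fin m → B)) :=
  (D12 k A m).liftKaehlerDifferential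

lemma deltaMap_D (p : B) :
    deltaMap k A m (KaehlerDifferential.D k B p) = (D1lin k A m p, D2lin k A m p) := by
  rw [deltaMap, Derivation.liftKaehlerDifferential_comp_D]
  rfl

/-- The map `B^m → Ω[B⁄k]`, sending `eⱼ` to `d Xⱼ`. -/
noncomputable def betaMap : (Fin m → B) →ₗ[B] (Ω[B⁄k]) :=
  ∑ j : Fin m, (LinearMap.proj j).smulRight (KaehlerDifferential.D k B (MvPolynomial.X j))

lemma betaMap_apply (y : Fin m → B) :
    betaMap k A m y = ∑ j : Fin m, y j • KaehlerDifferential.D k B (MvPolynomial.X j) := by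
  rw [betaMap, LinearMap.sum_apply]
  rfl

/-- The canonical map `(B ⊗[A] Ω[A⁄k]) × B^m → Ω[B⁄k]`. -/
noncomputable def gammaMap : ((B ⊗[A] (Ω[A⁄k])) × (Fin m → B)) →ₗ[B] (Ω[B⁄k]) :=
  (KaehlerDifferential.mapBaseChange k A B) ∘ₗ (LinearMap.fst B _ _)
    + (betaMap k A m) ∘ₗ (LinearMap.snd B _ _)

lemma gammaMap_apply (x : B ⊗[A] (Ω[A⁄k])) (y : Fin m → B) :
    gammaMap k A m (x, y) = KaehlerDifferential.mapBaseChange k A B x + betaMap k A m y := rfl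

end K3

section K4
variable (k A : Type*) [CommRing k] [CommRing A] [Algebra k A] (m : ℕ)

local notation "B" => MvPolynomial (Fin m) A

lemma gammaDelta_D (p : B) :
    gammaMap k A m (deltaMap k A m (KaehlerDifferential.D k B p))
      = KaehlerDifferential.D k B p := by
  induction p using MvPolynomial.induction_on with
  | C a =>
    rw [deltaMap_D, gammaMap_apply, D1lin_C]
    have h2 : D2lin k A m (MvPolynomial.C a) = 0 := by
      funext j
      rw [D2lin_apply, MvPolynomial.pderiv_C]
      rfl
    rw [h2, map_zero, add_zero, KaehlerDifferential.mapBaseChange_tmul,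
      KaehlerDifferential.map_D, one_smul]
    rfl
  | add p q hp hq =>
    rw [map_add, map_add, map_add, hp, hq]
  | mul_X p j hp =>
    have hXj : gammaMap k A m (deltaMap k A m (KaehlerDifferential.D k B (MvPolynomial.X j)))
        = KaehlerDifferential.D k B (MvPolynomial.X j) := by
      rw [deltaMap_D, gammaMap_apply, D1lin_X, map_zero, zero_add]
      have h2 : D2lin k A m (MvPolynomial.X j) = Pi.single j 1 := by
        funext l
        rw [D2lin_apply, MvPolynomial.pderiv_X]
        simp [Pi.single_apply, eq_comm]
      rw [h2, betaMap_apply]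
      rw [Finset.sum_eq_single j]
      · rw [Pi.single_eq_same, one_smul]
      · intro l _ hl
        rw [Pi.single_eq_of_ne hl, zero_smul]
      · intro h
        exact absurd (Finset.mem_univ j) h
    rw [Derivation.leibniz, map_add, map_add, LinearMap.map_smul, LinearMap.map_smul,
      LinearMap.map_smul, LinearMap.map_smul, hp, hXj]
end K4

section K5
variable (k A : Type*) [CommRing k] [CommRing A] [Algebra k A] (m : ℕ)

local notation "B" => MvPolynomial (Fin m) A

lemma deltaMap_mapD (w : Ω[A⁄k]) :
    deltaMap k A m (KaehlerDifferential.map k k A B w)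
      = ((1 : B) ⊗ₜ[A] w, (0 : Fin m → B)) := by
  have hw : w ∈ Submodule.span A (Set.range (KaehlerDifferential.D k A)) := by
    rw [KaehlerDifferential.span_range_derivation]
    trivial
  induction hw using Submodule.span_induction with
  | mem w hwmem =>
    obtain ⟨a, rfl⟩ := hwmem
    rw [KaehlerDifferential.map_D, deltaMap_D]
    have h2 : D2lin k A m (MvPolynomial.C a) = 0 := by
      funext j
      rw [D2lin_apply, MvPolynomial.pderiv_C]
      rfl
    rw [show algebraMap A B a = MvPolynomial.C a from rfl, D1lin_C, h2]
  | zero =>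
    rw [map_zero, map_zero, TensorProduct.tmul_zero]
    rfl
  | add x y _ _ hx hy =>
    rw [map_add, map_add, hx, hy, Prod.mk_add_mk, add_zero, ← TensorProduct.tmul_add]
  | smul a x _ hx =>
    rw [LinearMap.map_smul, LinearMap.map_smul_of_tower, hx, Prod.smul_mk, smul_zero,
      TensorProduct.tmul_smul]

lemma delta_gamma_fst (t : B ⊗[A] (Ω[A⁄k])) :
    deltaMap k A m (gammaMap k A m (t, 0)) = (t, 0) := by
  rw [gammaMap_apply, map_zero, add_zero]
  induction t with
  | zero => rw [map_zero, map_zero]; rfl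
  | add x y hx hy => rw [map_add, map_add, hx, hy, Prod.mk_add_mk, add_zero]
  | tmul b w =>
    rw [KaehlerDifferential.mapBaseChange_tmul, LinearMap.map_smul, deltaMap_mapD]
    rw [Prod.smul_mk, TensorProduct.smul_tmul', smul_eq_mul, mul_one, smul_zero]

lemma delta_gamma_snd (y : Fin m → B) :
    deltaMap k A m (gammaMap k A m (0, y)) = (0, y) := by
  rw [gammaMap_apply, map_zero, zero_add, betaMap_apply, map_sum]
  have h : ∀ j, deltaMap k A m (y j • KaehlerDifferential.D k B (MvPolynomial.X j))
      = (0, Pi.single j (y j)) := by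
    intro j
    rw [LinearMap.map_smul, deltaMap_D, D1lin_X]
    have h2 : D2lin k A m (MvPolynomial.X j) = Pi.single j 1 := by
      funext l
      rw [D2lin_apply, MvPolynomial.pderiv_X]
      simp [Pi.single_apply, eq_comm]
    rw [h2, Prod.smul_mk, smul_zero]
    congr 1
    funext l
    rw [Pi.smul_apply, Pi.single_apply, Pi.single_apply]
    by_cases hl : j = l <;> simp [hl]
  rw [Finset.sum_congr rfl (fun j _ => h j)]
  rw [Prod.ext_iff]
  constructor
  · rw [Prod.fst_sum]
    simp
  · rw [Prod.snd_sum]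
    show ∑ j, Pi.single j (y j) = y
    funext l
    rw [Finset.sum_apply]
    simp [Pi.single_apply]

/-- The splitting of `Ω[B⁄k]` for a polynomial algebra `B = A[X₁,…,Xₘ]`. -/
noncomputable def kaehlerPolyEquiv :
    ((B ⊗[A] (Ω[A⁄k])) × (Fin m → B)) ≃ₗ[B] (Ω[B⁄k]) := by
  refine LinearEquiv.ofLinear (gammaMap k A m) (deltaMap k A m) ?_ ?_
  · apply Derivation.liftKaehlerDifferential_unique
    apply Derivation.ext
    intro p
    show gammaMap k A m (deltaMap k A m (KaehlerDifferential.D k B p))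
      = KaehlerDifferential.D k B p
    exact gammaDelta_D k A m p
  · apply LinearMap.ext
    rintro ⟨t, y⟩
    have : (t, y) = ((t, 0) : _ × (Fin m → B)) + (0, y) := by rw [Prod.mk_add_mk, add_zero,
      zero_add]
    rw [this, map_add, map_add]
    show deltaMap k A m (gammaMap k A m (t, 0)) + deltaMap k A m (gammaMap k A m (0, y))
      = LinearMap.id (t, (0 : Fin m → B)) + LinearMap.id ((0 : B ⊗[A] (Ω[A⁄k])), y)
    rw [delta_gamma_fst, delta_gamma_snd]
    rfl
end K5


/-- Let `k` be a field, `A` a `k`-algebra of finite presentation, and `B = A[t_1,…,t_m]` a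
polynomial ring in `m` variables over `A`. Then for every integer `i`, the Fitting ideal
`Fitt_{i+m}(Ω¹_{B/k})` equals the extension to `B` of the Fitting ideal `Fitt_i(Ω¹_{A/k})`. -/
theorem statement5 (k : Type) [Field k] (A : Type) [CommRing A] [Algebra k A]
    (hA : Algebra.FinitePresentation k A) (m : ℕ) (i : ℤ) :
    fittingIdeal (MvPolynomial (Fin m) A)
        (KaehlerDifferential k (MvPolynomial (Fin m) A)) (i + m) =
      Ideal.map (algebraMap A (MvPolynomial (Fin m) A))
        (fittingIdeal A (KaehlerDifferential k A) i) := by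
  haveI := hA
  haveI hft : Algebra.FiniteType k A := Algebra.FiniteType.of_finitePresentation
  haveI hfin : Module.Finite A (Ω[A⁄k]) := inferInstance
  rw [fittingIdeal_congr ((kaehlerPolyEquiv k A m).symm) (i + m),
    fittingIdeal_prod_pi m i, fittingIdeal_baseChange]
end
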